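/- arXiv:gr-qc/0701034 — 7 statements merged into one kernel-verified Lean document; each statement's English description precedes it below -/
import Mathlib

section
/- Fix constants k, Λ ∈ ℝ. Let W ⊆ ℝ² be open, let r, Ω : W → ℝ be C² with r > 0 and Ω > 0 everywhere, and let T_uv, T_uu, T_vv : W → ℝ be functions such that on W (writing ν = ∂_u r, λ = ∂_v r): (evol1) ∂_u∂_v r = −kΩ²/(4r) − r⁻¹νλ + 4πr·T_uv + (1/4)rΩ²Λ; (const2) ∂_u(Ω⁻²ν) = −4πr·T_uu·Ω⁻²; (const1) ∂_v(Ω⁻²λ) = −4πr·T_vv·Ω⁻². Define the Hawking mass m := (r/2)(k + 4Ω⁻²νλ). Then throughout W: ∂_u m = 8πr²Ω⁻²(T_uv·ν − T_uu·λ) + (Λ/2)r²·ν, and ∂_v m = 8πr²Ω⁻²(T_uv·λ − T_vv·ν) + (Λ/2)r²·λ. -/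
open Real

/-- Partial derivative with respect to the first (`u`) coordinate. -/
noncomputable def pd1 (f : ℝ × ℝ → ℝ) (p : ℝ × ℝ) : ℝ :=
  deriv (fun x => f (x, p.2)) p.1

/-- Partial derivative with respect to the second (`v`) coordinate. -/
noncomputable def pd2 (f : ℝ × ℝ → ℝ) (p : ℝ × ℝ) : ℝ :=
  deriv (fun y => f (p.1, y)) p.2

lemma line1_hasDerivAt (p : ℝ × ℝ) :
    HasDerivAt (fun x : ℝ => (x, p.2)) ((1 : ℝ), (0 : ℝ)) p.1 :=
  (hasDerivAt_id p.1).prodMk (hasDerivAt_const p.1 p.2)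

lemma line2_hasDerivAt (p : ℝ × ℝ) :
    HasDerivAt (fun y : ℝ => (p.1, y)) ((0 : ℝ), (1 : ℝ)) p.2 :=
  (hasDerivAt_const p.2 p.1).prodMk (hasDerivAt_id p.2)

lemma slice1 {f : ℝ × ℝ → ℝ} {p : ℝ × ℝ} (h : DifferentiableAt ℝ f p) :
    HasDerivAt (fun x => f (x, p.2)) (pd1 f p) p.1 := by
  have hc : HasDerivAt (fun x => f (x, p.2)) (fderiv ℝ f p (1, 0)) p.1 := by
    have := h.hasFDerivAt.comp_hasDerivAt p.1 (line1_hasDerivAt p)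
    exact this
  simpa [pd1, hc.deriv] using hc.differentiableAt.hasDerivAt

lemma slice2 {f : ℝ × ℝ → ℝ} {p : ℝ × ℝ} (h : DifferentiableAt ℝ f p) :
    HasDerivAt (fun y => f (p.1, y)) (pd2 f p) p.2 := by
  have hc : HasDerivAt (fun y => f (p.1, y)) (fderiv ℝ f p (0, 1)) p.2 := by
    have := h.hasFDerivAt.comp_hasDerivAt p.2 (line2_hasDerivAt p)
    exact this
  simpa [pd2, hc.deriv] using hc.differentiableAt.hasDerivAt

lemma pd1_eq_fderiv {f : ℝ × ℝ → ℝ} {p : ℝ × ℝ} (h : DifferentiableAt ℝ f p) :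
    pd1 f p = fderiv ℝ f p (1, 0) := by
  have hc : HasDerivAt (fun x => f (x, p.2)) (fderiv ℝ f p (1, 0)) p.1 := by
    have := h.hasFDerivAt.comp_hasDerivAt p.1 (line1_hasDerivAt p)
    exact this
  simpa [pd1] using hc.deriv

lemma pd2_eq_fderiv {f : ℝ × ℝ → ℝ} {p : ℝ × ℝ} (h : DifferentiableAt ℝ f p) :
    pd2 f p = fderiv ℝ f p (0, 1) := by
  have hc : HasDerivAt (fun y => f (p.1, y)) (fderiv ℝ f p (0, 1)) p.2 := by
    have := h.hasFDerivAt.comp_hasDerivAt p.2 (line2_hasDerivAt p)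
    exact this
  simpa [pd2] using hc.deriv


/-- The identities (pum) and (pvm) for the Hawking mass
`m = (r/2)(k + 4 Ω⁻² (∂_u r)(∂_v r))`. -/
theorem hawking_mass_derivative_identities
    (k Λ : ℝ) (W : Set (ℝ × ℝ)) (hW : IsOpen W)
    (r Ω Tuv Tuu Tvv : ℝ × ℝ → ℝ)
    (hr : ContDiffOn ℝ 2 r W) (hΩ : ContDiffOn ℝ 2 Ω W)
    (hrpos : ∀ p ∈ W, 0 < r p) (hΩpos : ∀ p ∈ W, 0 < Ω p)
    (hevol1 : ∀ p ∈ W, pd1 (pd2 r) p =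
      -(k * Ω p ^ 2) / (4 * r p) - (r p)⁻¹ * pd1 r p * pd2 r p
        + 4 * π * r p * Tuv p + (1 / 4) * r p * Ω p ^ 2 * Λ)
    (hconst2 : ∀ p ∈ W, pd1 (fun q => (Ω q ^ 2)⁻¹ * pd1 r q) p =
      -(4 * π * r p * Tuu p * (Ω p ^ 2)⁻¹))
    (hconst1 : ∀ p ∈ W, pd2 (fun q => (Ω q ^ 2)⁻¹ * pd2 r q) p =
      -(4 * π * r p * Tvv p * (Ω p ^ 2)⁻¹)) :
    ∀ p ∈ W,
      pd1 (fun q => r q / 2 * (k + 4 * (Ω q ^ 2)⁻¹ * pd1 r q * pd2 r q)) p =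
        8 * π * r p ^ 2 * (Ω p ^ 2)⁻¹ * (Tuv p * pd1 r p - Tuu p * pd2 r p)
          + (Λ / 2) * r p ^ 2 * pd1 r p ∧
      pd2 (fun q => r q / 2 * (k + 4 * (Ω q ^ 2)⁻¹ * pd1 r q * pd2 r q)) p =
        8 * π * r p ^ 2 * (Ω p ^ 2)⁻¹ * (Tuv p * pd2 r p - Tvv p * pd1 r p)
          + (Λ / 2) * r p ^ 2 * pd2 r p := by
  intro p hp
  have hWn : W ∈ nhds p := hW.mem_nhds hp
  have hrCA : ContDiffAt ℝ 2 r p := hr.contDiffAt hWn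
  have hΩCA : ContDiffAt ℝ 2 Ω p := hΩ.contDiffAt hWn
  have hrd : DifferentiableAt ℝ r p := hrCA.differentiableAt two_ne_zero
  have hΩd : DifferentiableAt ℝ Ω p := hΩCA.differentiableAt two_ne_zero
  have hrpos' := hrpos p hp
  have hΩpos' := hΩpos p hp
  have hrne : r p ≠ 0 := ne_of_gt hrpos'
  have hΩne : Ω p ≠ 0 := ne_of_gt hΩpos'
  have hΩ2ne : Ω p ^ 2 ≠ 0 := pow_ne_zero 2 hΩne
  -- eventual differentiability of r
  have hre : ∀ᶠ q in nhds p, DifferentiableAt ℝ r q :=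
    Filter.eventually_of_mem hWn fun q hq =>
      (hr.contDiffAt (hW.mem_nhds hq)).differentiableAt two_ne_zero
  -- fderiv of r is C¹ at p
  have hF : ContDiffAt ℝ 1 (fderiv ℝ r) p := hrCA.fderiv_right (by norm_num)
  have hFd : DifferentiableAt ℝ (fderiv ℝ r) p := hF.differentiableAt one_ne_zero
  -- pd1 r and pd2 r are differentiable at p
  have heq1 : pd1 r =ᶠ[nhds p] fun q => fderiv ℝ r q (1, 0) :=
    hre.mono fun q hq => pd1_eq_fderiv hq
  have heq2 : pd2 r =ᶠ[nhds p] fun q => fderiv ℝ r q (0, 1) :=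
    hre.mono fun q hq => pd2_eq_fderiv hq
  have hFd1 : DifferentiableAt ℝ (fun q => fderiv ℝ r q ((1 : ℝ), (0 : ℝ))) p :=
    hFd.clm_apply (differentiableAt_const _)
  have hFd2 : DifferentiableAt ℝ (fun q => fderiv ℝ r q ((0 : ℝ), (1 : ℝ))) p :=
    hFd.clm_apply (differentiableAt_const _)
  have hpd1d : DifferentiableAt ℝ (pd1 r) p := hFd1.congr_of_eventuallyEq heq1
  have hpd2d : DifferentiableAt ℝ (pd2 r) p := hFd2.congr_of_eventuallyEq heq2
  -- Ω⁻² differentiable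
  have hΩ2d : DifferentiableAt ℝ (fun q => (Ω q ^ 2)⁻¹) p :=
    (hΩd.pow 2).inv hΩ2ne
  have hgUd : DifferentiableAt ℝ (fun q => (Ω q ^ 2)⁻¹ * pd1 r q) p := hΩ2d.mul hpd1d
  have hgVd : DifferentiableAt ℝ (fun q => (Ω q ^ 2)⁻¹ * pd2 r q) p := hΩ2d.mul hpd2d
  -- symmetry of second derivatives: pd2 (pd1 r) p = pd1 (pd2 r) p
  have hsymm : pd2 (pd1 r) p = pd1 (pd2 r) p := by
    have hs := hrCA.isSymmSndFDerivAt (by simp [minSmoothness_of_isRCLikeNormedField])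
    have e1 : pd2 (pd1 r) p = fderiv ℝ (fun q => fderiv ℝ r q ((1:ℝ),(0:ℝ))) p (0, 1) := by
      rw [pd2_eq_fderiv hpd1d, heq1.fderiv_eq]
    have e2 : pd1 (pd2 r) p = fderiv ℝ (fun q => fderiv ℝ r q ((0:ℝ),(1:ℝ))) p (1, 0) := by
      rw [pd1_eq_fderiv hpd2d, heq2.fderiv_eq]
    rw [e1, e2, fderiv_clm_apply hFd (differentiableAt_const _),
      fderiv_clm_apply hFd (differentiableAt_const _)]
    simp [hs (0, 1) (1, 0)]
  -- rewrite the mass function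
  have key : (fun q => r q / 2 * (k + 4 * (Ω q ^ 2)⁻¹ * pd1 r q * pd2 r q)) =
      fun q => k / 2 * r q + 2 * (r q * ((Ω q ^ 2)⁻¹ * pd1 r q) * pd2 r q) := by
    funext q; ring
  have key' : (fun q => r q / 2 * (k + 4 * (Ω q ^ 2)⁻¹ * pd1 r q * pd2 r q)) =
      fun q => k / 2 * r q + 2 * (r q * ((Ω q ^ 2)⁻¹ * pd2 r q) * pd1 r q) := by
    funext q; ring
  have hevol := hevol1 p hp
  constructor
  · -- u derivative
    have hA := slice1 hrd
    have hB := slice1 hgUd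
    have hC := slice1 hpd2d
    have hm : HasDerivAt
        (fun x => k / 2 * r (x, p.2) +
          2 * (r (x, p.2) * ((Ω (x, p.2) ^ 2)⁻¹ * pd1 r (x, p.2)) * pd2 r (x, p.2)))
        (k / 2 * pd1 r p +
          2 * ((pd1 r p * ((Ω p ^ 2)⁻¹ * pd1 r p) +
            r p * pd1 (fun q => (Ω q ^ 2)⁻¹ * pd1 r q) p) * pd2 r p +
            r p * ((Ω p ^ 2)⁻¹ * pd1 r p) * pd1 (pd2 r) p)) p.1 :=
      (hA.const_mul (k / 2)).add (((hA.mul hB).mul hC).const_mul 2)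
    rw [key]
    show deriv (fun x => k / 2 * r (x, p.2) +
      2 * (r (x, p.2) * ((Ω (x, p.2) ^ 2)⁻¹ * pd1 r (x, p.2)) * pd2 r (x, p.2))) p.1 = _
    rw [hm.deriv, hconst2 p hp, hevol]
    field_simp
    ring
  · -- v derivative
    have hA := slice2 hrd
    have hB := slice2 hgVd
    have hC := slice2 hpd1d
    have hm : HasDerivAt
        (fun y => k / 2 * r (p.1, y) +
          2 * (r (p.1, y) * ((Ω (p.1, y) ^ 2)⁻¹ * pd2 r (p.1, y)) * pd1 r (p.1, y)))
        (k / 2 * pd2 r p +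
          2 * ((pd2 r p * ((Ω p ^ 2)⁻¹ * pd2 r p) +
            r p * pd2 (fun q => (Ω q ^ 2)⁻¹ * pd2 r q) p) * pd1 r p +
            r p * ((Ω p ^ 2)⁻¹ * pd2 r p) * pd2 (pd1 r) p)) p.2 :=
      (hA.const_mul (k / 2)).add (((hA.mul hB).mul hC).const_mul 2)
    rw [key']
    show deriv (fun y => k / 2 * r (p.1, y) +
      2 * (r (p.1, y) * ((Ω (p.1, y) ^ 2)⁻¹ * pd2 r (p.1, y)) * pd1 r (p.1, y))) p.2 = _
    rw [hm.deriv, hconst1 p hp, hsymm, hevol]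
    field_simp
    ring
end

section
/- Let G be a symmetric positive-definite 2×2 real matrix, and let r, Ω, r₀ be positive reals with r ≥ r₀, and F ≥ 0, X ≥ 0. Let f : (0,∞)×ℝ² → [0,∞) be measurable with f ≤ F everywhere and f(p,q) = 0 whenever r⁴·⟨q, G q⟩ > X. Define P(p,q) := (1 + r²⟨q, G q⟩)/(Ω² p) (the mass-shell value of p^v), and set (as integrals with values in [0,∞]) N^u := ∫ r² f(p,q) √(det G) dp dq, N^v := ∫ r² P(p,q) f(p,q) p⁻¹ √(det G) dp dq, and T_uv := (Ω⁴/4) ∫ r² P(p,q) f(p,q) √(det G) dp dq, the integrals taken over (0,∞)×ℝ². Then T_uv ≤ (1 + X r₀⁻²)·(Ω²/4)·(N^u + N^v) + (1 + X r₀⁻²)·(Ω²/4)·π F X r₀⁻²·max(0, log(Ω²)). -/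
open MeasureTheory Matrix Real

lemma ellipse_vol (G : Matrix (Fin 2) (Fin 2) ℝ) (hGpos : G.PosDef) (c : ℝ) (hc : 0 ≤ c) :
    volume {q : Fin 2 → ℝ | q ⬝ᵥ G.mulVec q ≤ c}
      = ENNReal.ofReal ((Real.sqrt G.det)⁻¹ * (π * c)) := by
  obtain ⟨B, hB⟩ : ∃ B : Matrix (Fin 2) (Fin 2) ℝ, G = Bᴴ * B := by
    open scoped MatrixOrder in
    exact CStarAlgebra.nonneg_iff_eq_star_mul_self.mp hGpos.posSemidef.nonneg
  have hdetG : G.det = B.det * B.det := by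
    rw [hB, Matrix.det_mul, Matrix.det_conjTranspose, star_trivial]
  have hdetGpos : 0 < G.det := hGpos.det_pos
  have hdetB : B.det ≠ 0 := by
    intro h; rw [hdetG, h, mul_zero] at hdetGpos; exact lt_irrefl _ hdetGpos
  have hsq : Real.sqrt G.det = |B.det| := by
    rw [hdetG, ← sq, Real.sqrt_sq_eq_abs]
  have hquad : ∀ q : Fin 2 → ℝ, q ⬝ᵥ G.mulVec q = (B.mulVec q) ⬝ᵥ (B.mulVec q) := by
    intro q
    rw [hB, ← Matrix.mulVec_mulVec, Matrix.dotProduct_mulVec]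
    congr 1
    rw [Matrix.conjTranspose_eq_transpose_of_trivial, Matrix.vecMul_transpose]
  set D : Set (Fin 2 → ℝ) := {y | y ⬝ᵥ y ≤ c} with hD
  have hDmeas : MeasurableSet D := by
    have : Continuous fun y : Fin 2 → ℝ => y ⬝ᵥ y := by
      unfold dotProduct; fun_prop
    exact this.measurable measurableSet_Iic
  have hDvol : volume D = ENNReal.ofReal c * ENNReal.ofReal π := by
    rw [← (EuclideanSpace.volume_preserving_symm_measurableEquiv_toLp (Fin 2)).measure_preimage
      hDmeas.nullMeasurableSet]
    have hpre : (MeasurableEquiv.toLp 2 (Fin 2 → ℝ)).symm ⁻¹' D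
        = Metric.closedBall (0 : EuclideanSpace ℝ (Fin 2)) (Real.sqrt c) := by
      ext x
      simp only [Set.mem_preimage, hD, Set.mem_setOf_eq, Metric.mem_closedBall,
        dist_zero_right, EuclideanSpace.norm_eq]
      have hx : (MeasurableEquiv.toLp 2 (Fin 2 → ℝ)).symm x ⬝ᵥ
          (MeasurableEquiv.toLp 2 (Fin 2 → ℝ)).symm x = ∑ i, x i ^ 2 := by
        simp [dotProduct, sq]
      rw [hx]
      have hsum : (0:ℝ) ≤ ∑ i, x i ^ 2 := by positivity
      constructor
      · intro h
        calc Real.sqrt (∑ i, ‖x i‖ ^ 2) = Real.sqrt (∑ i, x i ^ 2) := by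
              simp [Real.norm_eq_abs, sq_abs]
          _ ≤ Real.sqrt c := Real.sqrt_le_sqrt h
      · intro h
        have h2 : Real.sqrt (∑ i, x i ^ 2) ≤ Real.sqrt c := by
          simpa [Real.norm_eq_abs, sq_abs] using h
        calc (∑ i, x i ^ 2) = Real.sqrt (∑ i, x i ^ 2) ^ 2 := (Real.sq_sqrt hsum).symm
          _ ≤ Real.sqrt c ^ 2 := by
              have := Real.sqrt_nonneg (∑ i, x i ^ 2); nlinarith
          _ = c := Real.sq_sqrt hc
    rw [hpre, EuclideanSpace.volume_closedBall]
    have h2 : (Fintype.card (Fin 2)) = 2 := by simp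
    rw [h2]
    have : Real.sqrt π ^ 2 / Real.Gamma ((2:ℕ) / 2 + 1) = π := by
      norm_num [Real.sq_sqrt Real.pi_nonneg, Real.Gamma_two]
    rw [this, ← ENNReal.ofReal_pow (Real.sqrt_nonneg c), Real.sq_sqrt hc]
  have hset : {q : Fin 2 → ℝ | q ⬝ᵥ G.mulVec q ≤ c} = Matrix.toLin' B ⁻¹' D := by
    ext q
    simp only [hD, Set.mem_setOf_eq, Set.mem_preimage, Matrix.toLin'_apply, hquad q]
  have hdet' : LinearMap.det (Matrix.toLin' B) ≠ 0 := by
    rwa [LinearMap.det_toLin']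
  rw [hset, Measure.addHaar_preimage_linearMap volume hdet', hDvol,
    LinearMap.det_toLin']
  rw [hsq, ← ENNReal.ofReal_mul (by positivity), ← ENNReal.ofReal_mul (by positivity)]
  congr 1
  rw [abs_inv]
  ring

set_option maxHeartbeats 1000000 in
/-- The null-structure estimate (comput): the energy-momentum component `T_uv` is bounded
by the particle currents `N^u`, `N^v` plus a small-momentum error, exploiting the angular
momentum bound `r⁴⟨q, G q⟩ ≤ X` on the support of `f` and `0 ≤ f ≤ F`. -/
theorem Tuv_particle_current_estimate
    (G : Matrix (Fin 2) (Fin 2) ℝ) (hGsymm : G.IsSymm) (hGpos : G.PosDef)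
    (r Ω r₀ : ℝ) (hr : 0 < r) (hΩ : 0 < Ω) (hr₀ : 0 < r₀) (hrr₀ : r₀ ≤ r)
    (F X : ℝ) (hF : 0 ≤ F) (hX : 0 ≤ X)
    (f : ℝ × (Fin 2 → ℝ) → ℝ) (hfmeas : Measurable f)
    (hf0 : ∀ x ∈ Set.Ioi (0 : ℝ) ×ˢ (Set.univ : Set (Fin 2 → ℝ)), 0 ≤ f x)
    (hfF : ∀ x ∈ Set.Ioi (0 : ℝ) ×ˢ (Set.univ : Set (Fin 2 → ℝ)), f x ≤ F)
    (hfsupp : ∀ x ∈ Set.Ioi (0 : ℝ) ×ˢ (Set.univ : Set (Fin 2 → ℝ)),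
      r ^ 4 * (x.2 ⬝ᵥ G.mulVec x.2) > X → f x = 0) :
    (∫⁻ x in Set.Ioi (0 : ℝ) ×ˢ (Set.univ : Set (Fin 2 → ℝ)),
        ENNReal.ofReal (Ω ^ 4 / 4 * (r ^ 2 *
          ((1 + r ^ 2 * (x.2 ⬝ᵥ G.mulVec x.2)) / (Ω ^ 2 * x.1)) * f x *
            Real.sqrt G.det)))
      ≤ ENNReal.ofReal ((1 + X * (r₀ ^ 2)⁻¹) * (Ω ^ 2 / 4)) *
          ((∫⁻ x in Set.Ioi (0 : ℝ) ×ˢ (Set.univ : Set (Fin 2 → ℝ)),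
              ENNReal.ofReal (r ^ 2 * f x * Real.sqrt G.det))
            + ∫⁻ x in Set.Ioi (0 : ℝ) ×ˢ (Set.univ : Set (Fin 2 → ℝ)),
              ENNReal.ofReal (r ^ 2 *
                ((1 + r ^ 2 * (x.2 ⬝ᵥ G.mulVec x.2)) / (Ω ^ 2 * x.1)) * f x * x.1⁻¹ *
                  Real.sqrt G.det))
        + ENNReal.ofReal ((1 + X * (r₀ ^ 2)⁻¹) * (Ω ^ 2 / 4) *
            (π * F * X * (r₀ ^ 2)⁻¹ * max 0 (Real.log (Ω ^ 2)))) := by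
  set S : Set (ℝ × (Fin 2 → ℝ)) := Set.Ioi (0 : ℝ) ×ˢ (Set.univ : Set (Fin 2 → ℝ)) with hS
  set s : ℝ := Real.sqrt G.det with hsdef
  have hs0 : 0 ≤ s := Real.sqrt_nonneg _
  have hspos : 0 < s := Real.sqrt_pos.mpr hGpos.det_pos
  set C : ℝ := 1 + X * (r₀ ^ 2)⁻¹ with hCdef
  have hC1 : 1 ≤ C := by
    have : 0 ≤ X * (r₀ ^ 2)⁻¹ := by positivity
    rw [hCdef]; linarith
  have hC0 : 0 ≤ C := by linarith
  set a : ℝ := (Ω ^ 2)⁻¹ with hadef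
  have ha : 0 < a := by positivity
  set L : ℝ := max 0 (Real.log (Ω ^ 2)) with hLdef
  have hL0 : 0 ≤ L := le_max_left _ _
  set c0 : ℝ := C * (Ω ^ 2 / 4) * F * (r ^ 2 * s) with hc0def
  have hc00 : 0 ≤ c0 := by positivity
  set Eset : Set (Fin 2 → ℝ) := {q | q ⬝ᵥ G.mulVec q ≤ X / r ^ 4} with hEdef
  have hQcont : Continuous fun q : Fin 2 → ℝ => q ⬝ᵥ G.mulVec q := by
    have h2 : (fun q : Fin 2 → ℝ => q ⬝ᵥ G.mulVec q)
        = fun q => ∑ i, ∑ j, q i * (G i j * q j) := by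
      funext q
      simp [dotProduct, mulVec, Finset.mul_sum]
      ring
    rw [h2]
    exact continuous_finset_sum _ fun i _ => continuous_finset_sum _ fun j _ =>
      (continuous_apply i).mul (continuous_const.mul (continuous_apply j))
  have hEmeas : MeasurableSet Eset := hQcont.measurable measurableSet_Iic
  set W : Set (ℝ × (Fin 2 → ℝ)) := Set.Ioo a 1 ×ˢ Eset with hWdef
  have hWmeas : MeasurableSet W := measurableSet_Ioo.prod hEmeas
  have hSmeas : MeasurableSet S := measurableSet_Ioi.prod MeasurableSet.univ
  have hWS : W ⊆ S := by
    intro x hx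
    exact ⟨lt_trans ha hx.1.1, trivial⟩
  set g : ℝ × (Fin 2 → ℝ) → ENNReal := fun x => ENNReal.ofReal (c0 * x.1⁻¹) with hgdef
  have hgmeas : Measurable g := ((measurable_fst.inv).const_mul c0).ennreal_ofReal
  set Err : ℝ × (Fin 2 → ℝ) → ENNReal := W.indicator g with hErrdef
  have hErrmeas : Measurable Err := hgmeas.indicator hWmeas
  have hA1meas : Measurable fun x : ℝ × (Fin 2 → ℝ) =>
      ENNReal.ofReal (r ^ 2 * f x * s) :=
    ((hfmeas.const_mul _).mul_const _).ennreal_ofReal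
  -- pointwise estimate
  have hpt : ∀ x ∈ S,
      ENNReal.ofReal (Ω ^ 4 / 4 * (r ^ 2 *
          ((1 + r ^ 2 * (x.2 ⬝ᵥ G.mulVec x.2)) / (Ω ^ 2 * x.1)) * f x * s))
        ≤ ENNReal.ofReal (C * (Ω ^ 2 / 4)) *
            (ENNReal.ofReal (r ^ 2 * f x * s)
              + ENNReal.ofReal (r ^ 2 *
                  ((1 + r ^ 2 * (x.2 ⬝ᵥ G.mulVec x.2)) / (Ω ^ 2 * x.1)) * f x * x.1⁻¹ * s))
          + Err x := by
    intro x hx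
    have hp : 0 < x.1 := hx.1
    set p : ℝ := x.1 with hpdef
    set Q : ℝ := x.2 ⬝ᵥ G.mulVec x.2 with hQdef
    have hQ0 : 0 ≤ Q := by
      rw [hQdef]
      simpa only [star_trivial] using hGpos.posSemidef.dotProduct_mulVec_nonneg x.2
    by_cases hfx : f x = 0
    · simp only [hfx, mul_zero, zero_mul, ENNReal.ofReal_zero]
      exact zero_le
    · have hQX : Q ≤ X / r ^ 4 := by
        by_contra h
        push_neg at h
        exact hfx (hfsupp x hx (by rw [gt_iff_lt, ← div_lt_iff₀' (by positivity)]; exact h))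
      have hfx0 : 0 ≤ f x := hf0 x hx
      have hfxF : f x ≤ F := hfF x hx
      have h1C : 1 + r ^ 2 * Q ≤ C := by
        have h1 : r ^ 2 * Q ≤ r ^ 2 * (X / r ^ 4) := by gcongr
        have h2 : r ^ 2 * (X / r ^ 4) = X / r ^ 2 := by field_simp
        have h3 : X / r ^ 2 ≤ X * (r₀ ^ 2)⁻¹ := by
          rw [div_eq_mul_inv]
          have : r₀ ^ 2 ≤ r ^ 2 := by nlinarith
          gcongr
        rw [hCdef]; linarith [h1.trans_eq h2 |>.trans h3]
      rcases le_or_gt 1 p with hp1 | hp1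
      · -- large p : bounded by the N^u term
        have hreal : Ω ^ 4 / 4 * (r ^ 2 * ((1 + r ^ 2 * Q) / (Ω ^ 2 * p)) * f x * s)
            ≤ C * (Ω ^ 2 / 4) * (r ^ 2 * f x * s) := by
          have hdiv : (1 + r ^ 2 * Q) / (Ω ^ 2 * p) ≤ C / Ω ^ 2 :=
            div_le_div₀ hC0 h1C (by positivity) (le_mul_of_one_le_right (by positivity) hp1)
          calc Ω ^ 4 / 4 * (r ^ 2 * ((1 + r ^ 2 * Q) / (Ω ^ 2 * p)) * f x * s)
              ≤ Ω ^ 4 / 4 * (r ^ 2 * (C / Ω ^ 2) * f x * s) := by gcongr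
            _ = C * (Ω ^ 2 / 4) * (r ^ 2 * f x * s) := by field_simp
        calc ENNReal.ofReal (Ω ^ 4 / 4 * (r ^ 2 * ((1 + r ^ 2 * Q) / (Ω ^ 2 * p)) * f x * s))
            ≤ ENNReal.ofReal (C * (Ω ^ 2 / 4) * (r ^ 2 * f x * s)) :=
              ENNReal.ofReal_le_ofReal hreal
          _ = ENNReal.ofReal (C * (Ω ^ 2 / 4)) * ENNReal.ofReal (r ^ 2 * f x * s) :=
              ENNReal.ofReal_mul (by positivity)
          _ ≤ ENNReal.ofReal (C * (Ω ^ 2 / 4)) *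
                (ENNReal.ofReal (r ^ 2 * f x * s)
                  + ENNReal.ofReal (r ^ 2 * ((1 + r ^ 2 * Q) / (Ω ^ 2 * p)) * f x * p⁻¹ * s)) := by
              gcongr
              exact le_self_add
          _ ≤ _ := le_add_of_nonneg_right (zero_le)
      · rcases le_or_gt p a with hpa | hpa
        · -- small p : bounded by the N^v term
          have hinv : Ω ^ 2 ≤ p⁻¹ := by
            rw [← one_div, le_div_iff₀ hp]
            calc Ω ^ 2 * p ≤ Ω ^ 2 * a := mul_le_mul_of_nonneg_left hpa (by positivity)
              _ = 1 := by rw [hadef]; field_simp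
          have hM : 0 ≤ r ^ 2 * ((1 + r ^ 2 * Q) / (Ω ^ 2 * p)) * f x * s := by positivity
          have hmul : Ω ^ 4 / 4 ≤ C * (Ω ^ 2 / 4) * p⁻¹ := by
            have h1 : Ω ^ 2 / 4 * Ω ^ 2 ≤ Ω ^ 2 / 4 * p⁻¹ :=
              mul_le_mul_of_nonneg_left hinv (by positivity)
            have h2 : 1 * (Ω ^ 2 / 4 * p⁻¹) ≤ C * (Ω ^ 2 / 4 * p⁻¹) :=
              mul_le_mul_of_nonneg_right hC1 (by positivity)
            nlinarith
          have hreal : Ω ^ 4 / 4 * (r ^ 2 * ((1 + r ^ 2 * Q) / (Ω ^ 2 * p)) * f x * s)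
              ≤ C * (Ω ^ 2 / 4) *
                  (r ^ 2 * ((1 + r ^ 2 * Q) / (Ω ^ 2 * p)) * f x * p⁻¹ * s) := by
            calc Ω ^ 4 / 4 * (r ^ 2 * ((1 + r ^ 2 * Q) / (Ω ^ 2 * p)) * f x * s)
                ≤ C * (Ω ^ 2 / 4) * p⁻¹ *
                    (r ^ 2 * ((1 + r ^ 2 * Q) / (Ω ^ 2 * p)) * f x * s) :=
                  mul_le_mul_of_nonneg_right hmul hM
              _ = C * (Ω ^ 2 / 4) *
                    (r ^ 2 * ((1 + r ^ 2 * Q) / (Ω ^ 2 * p)) * f x * p⁻¹ * s) := by ring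
          calc ENNReal.ofReal (Ω ^ 4 / 4 * (r ^ 2 * ((1 + r ^ 2 * Q) / (Ω ^ 2 * p)) * f x * s))
              ≤ ENNReal.ofReal (C * (Ω ^ 2 / 4) *
                  (r ^ 2 * ((1 + r ^ 2 * Q) / (Ω ^ 2 * p)) * f x * p⁻¹ * s)) :=
                ENNReal.ofReal_le_ofReal hreal
            _ = ENNReal.ofReal (C * (Ω ^ 2 / 4)) *
                  ENNReal.ofReal (r ^ 2 * ((1 + r ^ 2 * Q) / (Ω ^ 2 * p)) * f x * p⁻¹ * s) :=
                ENNReal.ofReal_mul (by positivity)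
            _ ≤ ENNReal.ofReal (C * (Ω ^ 2 / 4)) *
                  (ENNReal.ofReal (r ^ 2 * f x * s)
                    + ENNReal.ofReal (r ^ 2 * ((1 + r ^ 2 * Q) / (Ω ^ 2 * p)) * f x * p⁻¹ * s)) := by
                gcongr
                exact le_add_self
            _ ≤ _ := le_add_of_nonneg_right (zero_le)
        · -- middle region : bounded by the error term
          have hxW : x ∈ W := ⟨⟨hpa, hp1⟩, hQX⟩
          have hreal : Ω ^ 4 / 4 * (r ^ 2 * ((1 + r ^ 2 * Q) / (Ω ^ 2 * p)) * f x * s)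
              ≤ c0 * p⁻¹ := by
            have heq : Ω ^ 4 / 4 * (r ^ 2 * ((1 + r ^ 2 * Q) / (Ω ^ 2 * p)) * f x * s)
                = Ω ^ 2 / 4 * ((1 + r ^ 2 * Q) * (f x * (r ^ 2 * s))) * p⁻¹ := by
              field_simp
            rw [heq, hc0def]
            have h1 : (1 + r ^ 2 * Q) * (f x * (r ^ 2 * s)) ≤ C * (F * (r ^ 2 * s)) := by
              have := mul_le_mul h1C (by gcongr : f x * (r ^ 2 * s) ≤ F * (r ^ 2 * s))
                (by positivity) hC0
              exact this
            calc Ω ^ 2 / 4 * ((1 + r ^ 2 * Q) * (f x * (r ^ 2 * s))) * p⁻¹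
                ≤ Ω ^ 2 / 4 * (C * (F * (r ^ 2 * s))) * p⁻¹ := by gcongr
              _ = C * (Ω ^ 2 / 4) * F * (r ^ 2 * s) * p⁻¹ := by ring
          calc ENNReal.ofReal (Ω ^ 4 / 4 * (r ^ 2 * ((1 + r ^ 2 * Q) / (Ω ^ 2 * p)) * f x * s))
              ≤ ENNReal.ofReal (c0 * p⁻¹) := ENNReal.ofReal_le_ofReal hreal
            _ = Err x := by rw [hErrdef, Set.indicator_of_mem hxW]
            _ ≤ _ := le_add_self
  -- the error integral
  have hErrInt : (∫⁻ x in S, Err x)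
      ≤ ENNReal.ofReal (C * (Ω ^ 2 / 4) * (π * F * X * (r₀ ^ 2)⁻¹ * L)) := by
    have hstep : (∫⁻ x in S, Err x) = ∫⁻ x in W, g x := by
      rw [hErrdef, lintegral_indicator hWmeas, Measure.restrict_restrict hWmeas,
        Set.inter_eq_self_of_subset_left hWS]
    rw [hstep]
    have hprod : (volume : Measure (ℝ × (Fin 2 → ℝ))).restrict W
        = (volume.restrict (Set.Ioo a 1)).prod (volume.restrict Eset) := by
      rw [hWdef, Measure.prod_restrict, ← Measure.volume_eq_prod]
    rw [hprod]
    have hsplit : ∀ x : ℝ × (Fin 2 → ℝ), g x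
        = (fun p => ENNReal.ofReal (c0 * p⁻¹)) x.1 * (fun _ : Fin 2 → ℝ => (1:ENNReal)) x.2 := by
      intro x; simp [hgdef]
    calc (∫⁻ x, g x ∂(volume.restrict (Set.Ioo a 1)).prod (volume.restrict Eset))
        = (∫⁻ p in Set.Ioo a 1, ENNReal.ofReal (c0 * p⁻¹)) * volume Eset := by
          simp_rw [hsplit]
          rw [lintegral_prod_mul ((measurable_inv.const_mul c0).ennreal_ofReal).aemeasurable
            aemeasurable_const]
          rw [lintegral_one, Measure.restrict_apply_univ]
      _ ≤ ENNReal.ofReal (c0 * L) * ENNReal.ofReal (s⁻¹ * (π * (X / r ^ 4))) := by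
          rw [ellipse_vol G hGpos (X / r ^ 4) (by positivity)]
          gcongr
          -- the p-integral
          rcases le_or_gt 1 a with h1 | h1
          · rw [Set.Ioo_eq_empty (fun h => absurd h (not_lt.mpr h1)), Measure.restrict_empty,
              lintegral_zero_measure]
            exact zero_le
          · have hΩ2pos : 0 < Ω ^ 2 := by positivity
            have hΩ1 : 1 < Ω ^ 2 := by
              have := mul_lt_mul_of_pos_left h1 hΩ2pos
              rw [hadef, mul_inv_cancel₀ (ne_of_gt hΩ2pos), mul_one] at this
              exact this
            have hLeq : L = Real.log (Ω ^ 2) := max_eq_right (Real.log_nonneg hΩ1.le)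
            have hInt : IntegrableOn (fun p : ℝ => c0 * p⁻¹) (Set.Ioo a 1) := by
              apply IntegrableOn.mono_set _ Set.Ioo_subset_Icc_self
              apply ContinuousOn.integrableOn_Icc
              exact continuousOn_const.mul (continuousOn_id.inv₀
                fun x hx => ne_of_gt (lt_of_lt_of_le ha hx.1))
            rw [← ofReal_integral_eq_lintegral_ofReal hInt
              ((ae_restrict_iff' measurableSet_Ioo).2 (Filter.Eventually.of_forall
                fun p hp => by
                  have : 0 < p := lt_trans ha hp.1
                  positivity))]
            apply ENNReal.ofReal_le_ofReal
            have hval : ∫ p in Set.Ioo a 1, c0 * p⁻¹ = c0 * Real.log (Ω ^ 2) := by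
              rw [← MeasureTheory.integral_Ioc_eq_integral_Ioo,
                ← intervalIntegral.integral_of_le h1.le,
                intervalIntegral.integral_const_mul,
                integral_inv (by
                  rw [Set.uIcc_of_le h1.le]
                  rintro ⟨h0, -⟩
                  linarith)]
              congr 1
              rw [hadef]
              field_simp
            rw [hval, hLeq]
      _ = ENNReal.ofReal (c0 * L * (s⁻¹ * (π * (X / r ^ 4)))) :=
          (ENNReal.ofReal_mul (by positivity)).symm
      _ ≤ ENNReal.ofReal (C * (Ω ^ 2 / 4) * (π * F * X * (r₀ ^ 2)⁻¹ * L)) := by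
          apply ENNReal.ofReal_le_ofReal
          have hss : s * s⁻¹ = 1 := mul_inv_cancel₀ (ne_of_gt hspos)
          have heq : c0 * L * (s⁻¹ * (π * (X / r ^ 4)))
              = C * (Ω ^ 2 / 4) * (π * F * (X / r ^ 2) * L) * (s * s⁻¹) := by
            rw [hc0def]
            field_simp
          rw [heq, hss, mul_one]
          have hXr : X / r ^ 2 ≤ X * (r₀ ^ 2)⁻¹ := by
            rw [div_eq_mul_inv]
            have : r₀ ^ 2 ≤ r ^ 2 := by nlinarith
            gcongr
          calc C * (Ω ^ 2 / 4) * (π * F * (X / r ^ 2) * L)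
              ≤ C * (Ω ^ 2 / 4) * (π * F * (X * (r₀ ^ 2)⁻¹) * L) := by gcongr
            _ = C * (Ω ^ 2 / 4) * (π * F * X * (r₀ ^ 2)⁻¹ * L) := by ring
  -- assemble
  calc (∫⁻ x in S, ENNReal.ofReal (Ω ^ 4 / 4 * (r ^ 2 *
          ((1 + r ^ 2 * (x.2 ⬝ᵥ G.mulVec x.2)) / (Ω ^ 2 * x.1)) * f x * s)))
      ≤ ∫⁻ x in S, (ENNReal.ofReal (C * (Ω ^ 2 / 4)) *
            (ENNReal.ofReal (r ^ 2 * f x * s)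
              + ENNReal.ofReal (r ^ 2 *
                  ((1 + r ^ 2 * (x.2 ⬝ᵥ G.mulVec x.2)) / (Ω ^ 2 * x.1)) * f x * x.1⁻¹ * s))
          + Err x) := setLIntegral_mono' hSmeas hpt
    _ = ENNReal.ofReal (C * (Ω ^ 2 / 4)) *
          ((∫⁻ x in S, ENNReal.ofReal (r ^ 2 * f x * s))
            + ∫⁻ x in S, ENNReal.ofReal (r ^ 2 *
                ((1 + r ^ 2 * (x.2 ⬝ᵥ G.mulVec x.2)) / (Ω ^ 2 * x.1)) * f x * x.1⁻¹ * s)) +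
          ∫⁻ x in S, Err x := by
        rw [lintegral_add_right _ hErrmeas, lintegral_const_mul' _ _ ENNReal.ofReal_ne_top,
          lintegral_add_left hA1meas]
    _ ≤ ENNReal.ofReal (C * (Ω ^ 2 / 4)) *
          ((∫⁻ x in S, ENNReal.ofReal (r ^ 2 * f x * s))
            + ∫⁻ x in S, ENNReal.ofReal (r ^ 2 *
                ((1 + r ^ 2 * (x.2 ⬝ᵥ G.mulVec x.2)) / (Ω ^ 2 * x.1)) * f x * x.1⁻¹ * s)) +
          ENNReal.ofReal (C * (Ω ^ 2 / 4) * (π * F * X * (r₀ ^ 2)⁻¹ * L)) :=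
        add_le_add le_rfl hErrInt
end

section
/- For all constants k, Λ ∈ ℝ and reals 0 < r₀ ≤ R and V > 0 there exists C̃ > 0 with the following property. Let r : [0,V] → ℝ be C¹ with r₀ ≤ r ≤ R, write λ := r', let Ω, T : [0,V] → ℝ be continuous with Ω > 0 and T ≥ 0, and let ν : [0,V] → ℝ be C¹ satisfying ν'(v) = −k Ω(v)²/(4 r(v)) − r(v)⁻¹ λ(v) ν(v) + 4π r(v) T(v) + (1/4) r(v) Ω(v)² Λ for all v ∈ [0,V]. Then sup_{v∈[0,V]} |ν(v)| ≤ C̃ · ( |ν(0)| + |ν(V)| + ∫₀^V Ω(v̄)² dv̄ ). -/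
open Real

/-- The estimate (allowehave): the sup of `|ν|` along a constant-`u` null ray is controlled
by its two endpoint values and the integral of `Ω²`, with a constant depending only on
`k`, `Λ`, `r₀`, `R`, `V`. -/
theorem nu_sup_bound
    (k Λ r₀ R V : ℝ) (hr₀ : 0 < r₀) (hrR : r₀ ≤ R) (hV : 0 < V) :
    ∃ C : ℝ, 0 < C ∧
      ∀ (r lam Ω T ν : ℝ → ℝ),
        (∀ v ∈ Set.Icc (0 : ℝ) V, HasDerivWithinAt r (lam v) (Set.Icc 0 V) v) →
        ContinuousOn lam (Set.Icc 0 V) →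
        (∀ v ∈ Set.Icc (0 : ℝ) V, r₀ ≤ r v ∧ r v ≤ R) →
        ContinuousOn Ω (Set.Icc 0 V) →
        (∀ v ∈ Set.Icc (0 : ℝ) V, 0 < Ω v) →
        ContinuousOn T (Set.Icc 0 V) →
        (∀ v ∈ Set.Icc (0 : ℝ) V, 0 ≤ T v) →
        (∀ v ∈ Set.Icc (0 : ℝ) V, HasDerivWithinAt ν
          (-(k * Ω v ^ 2) / (4 * r v) - (r v)⁻¹ * lam v * ν v
            + 4 * π * r v * T v + (1 / 4) * r v * Ω v ^ 2 * Λ) (Set.Icc 0 V) v) →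
        ∀ v ∈ Set.Icc (0 : ℝ) V,
          |ν v| ≤ C * (|ν 0| + |ν V| + ∫ t in (0 : ℝ)..V, Ω t ^ 2) := by
  have hR : 0 < R := lt_of_lt_of_le hr₀ hrR
  set c : ℝ := (|k| + R ^ 2 * |Λ|) / 4 with hcdef
  have hc0 : 0 ≤ c := by positivity
  refine ⟨(R + c) / r₀, by positivity, ?_⟩
  intro r lam Ω T ν hr hlam hrb hΩc hΩpos hTc hT hν v hv
  have hrc : ContinuousOn r (Set.Icc 0 V) := fun x hx => (hr x hx).continuousWithinAt
  have hνc : ContinuousOn ν (Set.Icc 0 V) := fun x hx => (hν x hx).continuousWithinAt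
  set g : ℝ → ℝ := fun x => -(k * Ω x ^ 2) / 4 + 4 * π * r x ^ 2 * T x
      + (1 / 4) * r x ^ 2 * Ω x ^ 2 * Λ with hgdef
  have hgc : ContinuousOn g (Set.Icc 0 V) := by
    apply ContinuousOn.add
    apply ContinuousOn.add
    · exact (continuousOn_const.mul (hΩc.pow 2)).neg.div_const 4
    · exact ((continuousOn_const.mul (hrc.pow 2))).mul hTc
    · exact ((continuousOn_const.mul (hrc.pow 2)).mul (hΩc.pow 2)).mul continuousOn_const
  have hrpos : ∀ x ∈ Set.Icc (0:ℝ) V, 0 < r x :=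
    fun x hx => lt_of_lt_of_le hr₀ (hrb x hx).1
  have hf : ∀ x ∈ Set.Icc (0:ℝ) V,
      HasDerivWithinAt (fun t => r t * ν t) (g x) (Set.Icc 0 V) x := by
    intro x hx
    have h1 := (hr x hx).mul (hν x hx)
    refine h1.congr_deriv ?_
    have hrx : r x ≠ 0 := (hrpos x hx).ne'
    field_simp [hgdef]
    ring
  have ftc : ∀ a b : ℝ, 0 ≤ a → a ≤ b → b ≤ V →
      (∫ t in a..b, g t) = r b * ν b - r a * ν a := by
    intro a b ha hab hbV
    have hsub : Set.Icc a b ⊆ Set.Icc 0 V := Set.Icc_subset_Icc ha hbV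
    apply intervalIntegral.integral_eq_sub_of_hasDeriv_right_of_le hab
    · exact (hrc.mul hνc).mono hsub
    · intro x hx
      have hx' : x ∈ Set.Icc (0:ℝ) V := ⟨le_of_lt (lt_of_le_of_lt ha hx.1),
        le_of_lt (lt_of_lt_of_le hx.2 hbV)⟩
      have hnx : Set.Icc (0:ℝ) V ∈ nhds x :=
        Icc_mem_nhds (lt_of_le_of_lt ha hx.1) (lt_of_lt_of_le hx.2 hbV)
      exact ((hf x hx').hasDerivAt hnx).hasDerivWithinAt
    · exact (hgc.mono hsub).intervalIntegrable_of_Icc hab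
  have hΩint : IntervalIntegrable (fun t => Ω t ^ 2) MeasureTheory.volume 0 V :=
    (hΩc.pow 2).intervalIntegrable_of_Icc hV.le
  set I : ℝ := ∫ t in (0:ℝ)..V, Ω t ^ 2 with hIdef
  have hI0 : 0 ≤ I := by
    apply intervalIntegral.integral_nonneg hV.le
    intro x hx; positivity
  have hgl : ∀ x ∈ Set.Icc (0:ℝ) V, -(c * Ω x ^ 2) ≤ g x := by
    intro x hx
    have h1 : k ≤ |k| := le_abs_self k
    have h2 : -|Λ| ≤ Λ := neg_abs_le Λ
    have h3 : 0 ≤ T x := hT x hx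
    have h4 : 0 < r x := hrpos x hx
    have h5 : r x ≤ R := (hrb x hx).2
    have h6 : 0 ≤ Ω x ^ 2 := sq_nonneg _
    have h7 : r x ^ 2 ≤ R ^ 2 := by nlinarith
    have hπ : (0:ℝ) < π := pi_pos
    simp only [hgdef, hcdef]
    nlinarith [
      mul_le_mul_of_nonneg_right h7 (mul_nonneg h6 (abs_nonneg Λ)),
      mul_le_mul_of_nonneg_right h1 h6,
      mul_le_mul_of_nonneg_left h2 (mul_nonneg (sq_nonneg (r x)) h6),
      mul_nonneg (mul_nonneg (le_of_lt hπ) (sq_nonneg (r x))) h3]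
  have hintlb : ∀ a b : ℝ, 0 ≤ a → a ≤ b → b ≤ V → -(c * I) ≤ ∫ t in a..b, g t := by
    intro a b ha hab hbV
    have hsub : Set.Icc a b ⊆ Set.Icc 0 V := Set.Icc_subset_Icc ha hbV
    have hΩab : IntervalIntegrable (fun t => Ω t ^ 2) MeasureTheory.volume a b :=
      ((hΩc.pow 2).mono hsub).intervalIntegrable_of_Icc hab
    have h1 : (∫ t in a..b, -(c * Ω t ^ 2)) ≤ ∫ t in a..b, g t := by
      apply intervalIntegral.integral_mono_on hab
        (hΩab.const_mul c).neg ((hgc.mono hsub).intervalIntegrable_of_Icc hab)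
      intro x hx; exact hgl x (hsub hx)
    have h2 : (∫ t in a..b, -(c * Ω t ^ 2)) = -(c * ∫ t in a..b, Ω t ^ 2) := by
      rw [intervalIntegral.integral_neg, intervalIntegral.integral_const_mul]
    have h3 : (∫ t in a..b, Ω t ^ 2) ≤ I := by
      apply intervalIntegral.integral_mono_interval ha hab hbV _ hΩint
      filter_upwards with x
      simp only [Pi.zero_apply]
      positivity
    nlinarith [mul_le_mul_of_nonneg_left h3 hc0]
  obtain ⟨hv0, hvV⟩ := hv
  have hvmem : v ∈ Set.Icc (0:ℝ) V := ⟨hv0, hvV⟩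
  have h0mem : (0:ℝ) ∈ Set.Icc (0:ℝ) V := ⟨le_refl _, hV.le⟩
  have hVmem : V ∈ Set.Icc (0:ℝ) V := ⟨hV.le, le_refl _⟩
  have e1 : r 0 * ν 0 - c * I ≤ r v * ν v := by
    have := hintlb 0 v (le_refl _) hv0 hvV
    rw [ftc 0 v (le_refl _) hv0 hvV] at this
    linarith
  have e2 : r v * ν v ≤ r V * ν V + c * I := by
    have := hintlb v V hv0 hvV (le_refl _)
    rw [ftc v V hv0 hvV (le_refl _)] at this
    linarith
  -- bounds on endpoint terms
  have hb0 : -(R * |ν 0|) ≤ r 0 * ν 0 := by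
    have h1 : 0 < r 0 := hrpos 0 h0mem
    have h2 : r 0 ≤ R := (hrb 0 h0mem).2
    have h3 : -|ν 0| ≤ ν 0 := neg_abs_le _
    nlinarith [abs_nonneg (ν 0)]
  have hbV : r V * ν V ≤ R * |ν V| := by
    have h1 : 0 < r V := hrpos V hVmem
    have h2 : r V ≤ R := (hrb V hVmem).2
    have h3 : ν V ≤ |ν V| := le_abs_self _
    nlinarith [abs_nonneg (ν V)]
  have hrv : 0 < r v := hrpos v hvmem
  set S : ℝ := |ν 0| + |ν V| + I with hSdef
  have hS0 : 0 ≤ S := by positivity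
  have key : |ν v| * r₀ ≤ (R + c) * S := by
    rcases le_or_gt 0 (ν v) with hsign | hsign
    · rw [abs_of_nonneg hsign]
      have : r₀ * ν v ≤ r v * ν v := mul_le_mul_of_nonneg_right (hrb v hvmem).1 hsign
      nlinarith [abs_nonneg (ν 0), abs_nonneg (ν V), mul_nonneg hc0 hI0]
    · rw [abs_of_neg hsign]
      have : r v * ν v ≤ r₀ * ν v :=
        mul_le_mul_of_nonpos_right (hrb v hvmem).1 hsign.le
      nlinarith [abs_nonneg (ν 0), abs_nonneg (ν V), mul_nonneg hc0 hI0]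
  rw [div_mul_eq_mul_div, le_div_iff₀ hr₀]
  linarith [key]
end

section
/- For all constants k, Λ ∈ ℝ, reals 0 < r₀ ≤ R, U > 0, V > 0, B ≥ 0 and C ≥ 0, there exists C̃ ∈ ℝ with the following property. Let r, Ω : [0,U]×[0,V] → ℝ be C² with r > 0 and Ω > 0, and let T_uv, T_uu, T_vv, S : [0,U]×[0,V] → ℝ be continuous and nonnegative such that, writing ν = ∂_u r and λ = ∂_v r: (evol1) ∂_u∂_v r = −kΩ²/(4r) − r⁻¹νλ + 4πr T_uv + (1/4)rΩ²Λ; (evol2) ∂_u∂_v log Ω = −4π T_uv + kΩ²/(4r²) + r⁻²νλ − πΩ² S; (const1) ∂_v(Ω⁻²λ) = −4πr T_vv Ω⁻²; (const2) ∂_u(Ω⁻²ν) = −4πr T_uu Ω⁻². Suppose moreover r₀ ≤ r ≤ R on the rectangle, ∫₀^U ∫₀^V Ω² du dv ≤ B, and |log Ω²(0,v)| ≤ C and |log Ω²(u,0)| ≤ C for all u ∈ [0,U], v ∈ [0,V]. Then log Ω² ≤ C̃ on all of [0,U]×[0,V]. -/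
open Real

/-- The closed characteristic rectangle `[0,U] × [0,V]`. -/
def rect (U V : ℝ) : Set (ℝ × ℝ) := Set.Icc 0 U ×ˢ Set.Icc 0 V

lemma hasDerivAt_pd2 {F : ℝ × ℝ → ℝ} {q : ℝ × ℝ} (h : DifferentiableAt ℝ F q) :
    HasDerivAt (fun y => F (q.1, y)) (pd2 F q) q.2 := by
  have h1 : HasDerivAt (fun y : ℝ => ((q.1, y) : ℝ × ℝ)) ((0 : ℝ), (1 : ℝ)) q.2 :=
    (hasDerivAt_const _ _).prodMk (hasDerivAt_id _)
  have h2 : HasDerivAt (fun y : ℝ => F (q.1, y)) (fderiv ℝ F (q.1, q.2) ((0:ℝ),(1:ℝ))) q.2 := by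
    have := h.hasFDerivAt
    rw [show q = (q.1, q.2) from rfl] at this
    exact this.comp_hasDerivAt q.2 h1
  rw [pd2, h2.deriv]; exact h2

lemma hasDerivAt_pd1 {F : ℝ × ℝ → ℝ} {q : ℝ × ℝ} (h : DifferentiableAt ℝ F q) :
    HasDerivAt (fun x => F (x, q.2)) (pd1 F q) q.1 := by
  have h1 : HasDerivAt (fun x : ℝ => ((x, q.2) : ℝ × ℝ)) ((1 : ℝ), (0 : ℝ)) q.1 :=
    (hasDerivAt_id _).prodMk (hasDerivAt_const _ _)
  have h2 : HasDerivAt (fun x : ℝ => F (x, q.2)) (fderiv ℝ F (q.1, q.2) ((1:ℝ),(0:ℝ))) q.1 := by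
    have := h.hasFDerivAt
    rw [show q = (q.1, q.2) from rfl] at this
    exact this.comp_hasDerivAt q.1 h1
  rw [pd1, h2.deriv]; exact h2

lemma pd2_contDiffOn {F : ℝ × ℝ → ℝ} {s : Set (ℝ × ℝ)} (hs : IsOpen s)
    (hF : ContDiffOn ℝ 2 F s) : ContDiffOn ℝ 1 (pd2 F) s := by
  have hfd : ContDiffOn ℝ 1 (fderiv ℝ F) s := hF.fderiv_of_isOpen hs (by norm_num)
  have happ : ContDiffOn ℝ 1 (fun z => fderiv ℝ F z ((0:ℝ),(1:ℝ))) s :=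
    hfd.clm_apply contDiffOn_const
  refine happ.congr fun z hz => ?_
  have hd : DifferentiableAt ℝ F z :=
    (hF.contDiffAt (hs.mem_nhds hz)).differentiableAt (by norm_num)
  have h1 : HasDerivAt (fun y : ℝ => ((z.1, y) : ℝ × ℝ)) ((0 : ℝ), (1 : ℝ)) z.2 :=
    (hasDerivAt_const _ _).prodMk (hasDerivAt_id _)
  have h2 : HasDerivAt (fun y : ℝ => F (z.1, y)) (fderiv ℝ F (z.1, z.2) ((0:ℝ),(1:ℝ))) z.2 := by
    have := hd.hasFDerivAt
    rw [show z = (z.1, z.2) from rfl] at this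
    exact this.comp_hasDerivAt z.2 h1
  exact h2.deriv

lemma hasDerivAt_pd1_pd2 {F : ℝ × ℝ → ℝ} {s : Set (ℝ × ℝ)} {q : ℝ × ℝ} (hs : IsOpen s)
    (hq : q ∈ s) (hF : ContDiffOn ℝ 2 F s) :
    HasDerivAt (fun x => pd2 F (x, q.2)) (pd1 (pd2 F) q) q.1 := by
  have h1 : ContDiffOn ℝ 1 (pd2 F) s := pd2_contDiffOn hs hF
  have h2 : DifferentiableAt ℝ (pd2 F) q :=
    (h1.contDiffAt (hs.mem_nhds hq)).differentiableAt one_ne_zero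
  exact hasDerivAt_pd1 h2

noncomputable def Gfun (r Ω : ℝ × ℝ → ℝ) : ℝ × ℝ → ℝ :=
  fun z => 2 * Real.log (Ω z) + Real.log (r z)

open MeasureTheory

noncomputable def Efun (k Λ : ℝ) (r Ω Tuv S : ℝ × ℝ → ℝ) : ℝ × ℝ → ℝ :=
  fun z => -(4 * π * Tuv z) + k * Ω z ^ 2 / (4 * r z ^ 2) + Ω z ^ 2 * Λ / 4
    - 2 * π * Ω z ^ 2 * S z

/-- The a priori estimate of Section 7.4 ('Alternative assumptions'): finite spacetime
volume `∫∫ Ω²`, two-sided bounds on `r`, and data bounds on the initial null segments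
force a uniform upper bound on `log Ω²` on the whole rectangle. -/
theorem logOmega_squared_upper_bound
    (k Λ r₀ R U V B C : ℝ)
    (hr₀ : 0 < r₀) (hrR : r₀ ≤ R) (hU : 0 < U) (hV : 0 < V) (hB : 0 ≤ B) (hC : 0 ≤ C) :
    ∃ C' : ℝ,
      ∀ (r Ω Tuv Tuu Tvv S : ℝ × ℝ → ℝ),
        ContDiffOn ℝ 2 r (rect U V) → ContDiffOn ℝ 2 Ω (rect U V) →
        (∀ p ∈ rect U V, 0 < r p) → (∀ p ∈ rect U V, 0 < Ω p) →
        ContinuousOn Tuv (rect U V) → ContinuousOn Tuu (rect U V) →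
        ContinuousOn Tvv (rect U V) → ContinuousOn S (rect U V) →
        (∀ p ∈ rect U V, 0 ≤ Tuv p) → (∀ p ∈ rect U V, 0 ≤ Tuu p) →
        (∀ p ∈ rect U V, 0 ≤ Tvv p) → (∀ p ∈ rect U V, 0 ≤ S p) →
        (∀ p ∈ rect U V, pd1 (pd2 r) p =
          -(k * Ω p ^ 2) / (4 * r p) - (r p)⁻¹ * pd1 r p * pd2 r p
            + 4 * π * r p * Tuv p + (1 / 4) * r p * Ω p ^ 2 * Λ) →
        (∀ p ∈ rect U V, pd1 (pd2 (fun q => Real.log (Ω q))) p =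
          -(4 * π * Tuv p) + k * Ω p ^ 2 / (4 * r p ^ 2)
            + (r p ^ 2)⁻¹ * pd1 r p * pd2 r p - π * Ω p ^ 2 * S p) →
        (∀ p ∈ rect U V, pd2 (fun q => (Ω q ^ 2)⁻¹ * pd2 r q) p =
          -(4 * π * r p * Tvv p * (Ω p ^ 2)⁻¹)) →
        (∀ p ∈ rect U V, pd1 (fun q => (Ω q ^ 2)⁻¹ * pd1 r q) p =
          -(4 * π * r p * Tuu p * (Ω p ^ 2)⁻¹)) →
        (∀ p ∈ rect U V, r₀ ≤ r p ∧ r p ≤ R) →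
        (∫ u in (0 : ℝ)..U, ∫ v in (0 : ℝ)..V, Ω (u, v) ^ 2) ≤ B →
        (∀ v ∈ Set.Icc (0 : ℝ) V, |Real.log (Ω (0, v) ^ 2)| ≤ C) →
        (∀ u ∈ Set.Icc (0 : ℝ) U, |Real.log (Ω (u, 0) ^ 2)| ≤ C) →
        ∀ p ∈ rect U V, Real.log (Ω p ^ 2) ≤ C' := by
  set M : ℝ := |k| / (4 * r₀ ^ 2) + |Λ| / 4 with hMdef
  have hM : 0 ≤ M := by positivity
  refine ⟨3 * C + 2 * Real.log R - 2 * Real.log r₀ + M * B, ?_⟩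
  intro r Ω Tuv Tuu Tvv S hr2 hΩ2 hrpos hΩpos hTuvc hTuuc hTvvc hSc
    hTuv0 hTuu0 hTvv0 hS0 evol1 evol2 _const1 _const2 hrbd hBint hdataV hdataU
  -- basic sets
  set s : Set (ℝ × ℝ) := Set.Ioo 0 U ×ˢ Set.Ioo 0 V with hsdef
  have hsopen : IsOpen s := isOpen_Ioo.prod isOpen_Ioo
  have hssub : s ⊆ rect U V := Set.prod_mono Set.Ioo_subset_Icc_self Set.Ioo_subset_Icc_self
  have hcpt : IsCompact (rect U V) := isCompact_Icc.prod isCompact_Icc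
  -- nonvanishing
  have hrne : ∀ z ∈ rect U V, r z ≠ 0 := fun z hz => (hrpos z hz).ne'
  have hΩne : ∀ z ∈ rect U V, Ω z ≠ 0 := fun z hz => (hΩpos z hz).ne'
  -- continuity on rect
  have hrc : ContinuousOn r (rect U V) := hr2.continuousOn
  have hΩc : ContinuousOn Ω (rect U V) := hΩ2.continuousOn
  have hGc : ContinuousOn (Gfun r Ω) (rect U V) := by
    exact (continuousOn_const.mul (hΩc.log hΩne)).add (hrc.log hrne)
  have hEc : ContinuousOn (Efun k Λ r Ω Tuv S) (rect U V) := by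
    refine ContinuousOn.sub (ContinuousOn.add (ContinuousOn.add ?_ ?_) ?_) ?_
    · exact (continuousOn_const.mul hTuvc).neg
    · exact (continuousOn_const.mul (hΩc.pow 2)).div
        (continuousOn_const.mul (hrc.pow 2)) (fun z hz => by
          have := hrpos z hz; positivity)
    · exact ((hΩc.pow 2).mul continuousOn_const).div continuousOn_const (by norm_num)
    · exact ((continuousOn_const.mul (hΩc.pow 2)).mul hSc)
  -- smoothness on s
  have hrs : ContDiffOn ℝ 2 r s := hr2.mono hssub
  have hΩs : ContDiffOn ℝ 2 Ω s := hΩ2.mono hssub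
  have hlogΩ : ContDiffOn ℝ 2 (fun z => Real.log (Ω z)) s := fun z hz =>
    ((hΩs.contDiffAt (hsopen.mem_nhds hz)).log (hΩne z (hssub hz))).contDiffWithinAt
  have hlogr : ContDiffOn ℝ 2 (fun z => Real.log (r z)) s := fun z hz =>
    ((hrs.contDiffAt (hsopen.mem_nhds hz)).log (hrne z (hssub hz))).contDiffWithinAt
  have hGs : ContDiffOn ℝ 2 (Gfun r Ω) s := (contDiffOn_const.mul hlogΩ).add hlogr
  have hGd : ∀ z ∈ s, DifferentiableAt ℝ (Gfun r Ω) z := fun z hz =>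
    (hGs.contDiffAt (hsopen.mem_nhds hz)).differentiableAt two_ne_zero
  have hrd : ∀ z ∈ s, DifferentiableAt ℝ r z := fun z hz =>
    (hrs.contDiffAt (hsopen.mem_nhds hz)).differentiableAt two_ne_zero
  have hΩd : ∀ z ∈ s, DifferentiableAt ℝ Ω z := fun z hz =>
    (hΩs.contDiffAt (hsopen.mem_nhds hz)).differentiableAt two_ne_zero
  have hlogΩd : ∀ z ∈ s, DifferentiableAt ℝ (fun z => Real.log (Ω z)) z := fun z hz =>
    (hlogΩ.contDiffAt (hsopen.mem_nhds hz)).differentiableAt two_ne_zero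
  have hlogrd : ∀ z ∈ s, DifferentiableAt ℝ (fun z => Real.log (r z)) z := fun z hz =>
    (hlogr.contDiffAt (hsopen.mem_nhds hz)).differentiableAt two_ne_zero
  -- eventual membership along horizontal lines
  have hev_mem : ∀ q ∈ s, ∀ᶠ x in nhds q.1, ((x, q.2) : ℝ × ℝ) ∈ s := by
    intro q hq
    have hc : ContinuousAt (fun x : ℝ => ((x, q.2) : ℝ × ℝ)) q.1 :=
      (continuous_id.prodMk continuous_const).continuousAt
    exact hc.preimage_mem_nhds (hsopen.mem_nhds hq)
  -- pointwise formulas on s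
  have hpd2G : ∀ z ∈ s, pd2 (Gfun r Ω) z =
      2 * pd2 (fun w => Real.log (Ω w)) z + pd2 (fun w => Real.log (r w)) z := by
    intro z hz
    have h1 := (hasDerivAt_pd2 (hlogΩd z hz)).const_mul (2 : ℝ)
    have h2 := hasDerivAt_pd2 (hlogrd z hz)
    exact (h1.add h2).deriv
  have hpd2logr : ∀ z ∈ s, pd2 (fun w => Real.log (r w)) z = pd2 r z / r z := by
    intro z hz
    exact ((hasDerivAt_pd2 (hrd z hz)).log (hrne z (hssub hz))).deriv
  -- the key identity:  pd1 (pd2 G) = E  on s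
  have hEeq : ∀ q ∈ s, pd1 (pd2 (Gfun r Ω)) q = Efun k Λ r Ω Tuv S q := by
    intro q hq
    have hqr := hssub hq
    have hrq := hrpos q hqr
    have hrqne : r q ≠ 0 := hrq.ne'
    -- mixed derivative of log r
    have hmixlogr : pd1 (pd2 (fun w => Real.log (r w))) q =
        (pd1 (pd2 r) q * r q - pd2 r q * pd1 r q) / r q ^ 2 := by
      have hnum : HasDerivAt (fun x => pd2 r (x, q.2)) (pd1 (pd2 r) q) q.1 :=
        hasDerivAt_pd1_pd2 hsopen hq hrs
      have hden : HasDerivAt (fun x => r (x, q.2)) (pd1 r q) q.1 :=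
        hasDerivAt_pd1 (hrd q hq)
      have hdiv := hnum.div hden hrqne
      have hev : (fun x => pd2 (fun w => Real.log (r w)) (x, q.2)) =ᶠ[nhds q.1]
          (fun x => pd2 r (x, q.2) / r (x, q.2)) :=
        (hev_mem q hq).mono fun x hx => hpd2logr _ hx
      exact (hdiv.congr_of_eventuallyEq hev).deriv
    -- mixed derivative of G
    have hmixG : pd1 (pd2 (Gfun r Ω)) q =
        2 * pd1 (pd2 (fun w => Real.log (Ω w))) q + pd1 (pd2 (fun w => Real.log (r w))) q := by
      have h1 : HasDerivAt (fun x => pd2 (fun w => Real.log (Ω w)) (x, q.2))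
          (pd1 (pd2 (fun w => Real.log (Ω w))) q) q.1 := hasDerivAt_pd1_pd2 hsopen hq hlogΩ
      have h2 : HasDerivAt (fun x => pd2 (fun w => Real.log (r w)) (x, q.2))
          (pd1 (pd2 (fun w => Real.log (r w))) q) q.1 := hasDerivAt_pd1_pd2 hsopen hq hlogr
      have hsum := (h1.const_mul (2 : ℝ)).add h2
      have hev : (fun x => pd2 (Gfun r Ω) (x, q.2)) =ᶠ[nhds q.1]
          (fun x => 2 * pd2 (fun w => Real.log (Ω w)) (x, q.2)
            + pd2 (fun w => Real.log (r w)) (x, q.2)) :=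
        (hev_mem q hq).mono fun x hx => hpd2G _ hx
      exact (hsum.congr_of_eventuallyEq hev).deriv
    rw [hmixG, hmixlogr, evol2 q hqr, evol1 q hqr]
    simp only [Efun]
    have hΩq := hΩpos q hqr
    field_simp
    ring
  -- the key bound:  E ≤ M * Ω²  on rect
  have hEle : ∀ z ∈ rect U V, Efun k Λ r Ω Tuv S z ≤ M * Ω z ^ 2 := by
    intro z hz
    have h₁ : (0:ℝ) ≤ Ω z ^ 2 := sq_nonneg _
    have hrz := (hrbd z hz).1
    have hk : k * Ω z ^ 2 / (4 * r z ^ 2) ≤ |k| * Ω z ^ 2 / (4 * r₀ ^ 2) :=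
      div_le_div₀ (by positivity) (mul_le_mul_of_nonneg_right (le_abs_self k) h₁)
        (by positivity) (by nlinarith)
    have hΛ : Ω z ^ 2 * Λ / 4 ≤ Ω z ^ 2 * |Λ| / 4 := by
      have := le_abs_self Λ
      nlinarith
    have h3 : (0:ℝ) ≤ 4 * π * Tuv z := by
      have := hTuv0 z hz; positivity
    have h4 : (0:ℝ) ≤ 2 * π * Ω z ^ 2 * S z := by
      have := hS0 z hz; positivity
    have hMM : M * Ω z ^ 2 = |k| * Ω z ^ 2 / (4 * r₀ ^ 2) + Ω z ^ 2 * |Λ| / 4 := by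
      rw [hMdef]; ring
    simp only [Efun]
    linarith
  -- main interior estimate
  suffices hins : ∀ q ∈ s, Real.log (Ω q ^ 2) ≤ 3 * C + 2 * Real.log R - 2 * Real.log r₀ + M * B by
    intro p hp
    have hclos : rect U V ⊆ closure s := by
      rw [hsdef, closure_prod_eq, closure_Ioo hU.ne, closure_Ioo hV.ne]
      exact fun z hz => hz
    have hcw : ContinuousWithinAt (fun z => Real.log (Ω z ^ 2)) s p := by
      have hco : ContinuousOn (fun z => Real.log (Ω z ^ 2)) (rect U V) :=
        (hΩc.pow 2).log (fun z hz => by have := hΩpos z hz; exact pow_ne_zero 2 this.ne')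
      exact (hco p hp).mono hssub
    haveI : (nhdsWithin p s).NeBot := mem_closure_iff_nhdsWithin_neBot.mp (hclos hp)
    exact le_of_tendsto hcw
      (Filter.eventually_of_mem self_mem_nhdsWithin (fun q hq => hins q hq))
  rintro ⟨u, v⟩ hq
  obtain ⟨hu, hv⟩ := hq
  obtain ⟨hu0, huU⟩ := hu
  obtain ⟨hv0, hvV⟩ := hv
  have huvs : ((u, v) : ℝ × ℝ) ∈ s := ⟨⟨hu0, huU⟩, ⟨hv0, hvV⟩⟩
  -- memberships of boundary points
  have hmem_u0 : ((u, 0) : ℝ × ℝ) ∈ rect U V := ⟨⟨hu0.le, huU.le⟩, ⟨le_rfl, hV.le⟩⟩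
  have hmem_0v : ((0, v) : ℝ × ℝ) ∈ rect U V := ⟨⟨le_rfl, hU.le⟩, ⟨hv0.le, hvV.le⟩⟩
  have hmem_00 : ((0, 0) : ℝ × ℝ) ∈ rect U V := ⟨⟨le_rfl, hU.le⟩, ⟨le_rfl, hV.le⟩⟩
  have hmem_uv : ((u, v) : ℝ × ℝ) ∈ rect U V := hssub huvs
  -- the ε-estimate
  have hkey : ∀ ε ∈ Set.Ioo (0:ℝ) (min u v),
      Gfun r Ω (u, v) ≤ Gfun r Ω (u, ε) + Gfun r Ω (ε, v) - Gfun r Ω (ε, ε) + M * B := by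
    intro ε hε
    have hε0 : (0:ℝ) < ε := hε.1
    have hεu : ε < u := lt_of_lt_of_le hε.2 (min_le_left _ _)
    have hεv : ε < v := lt_of_lt_of_le hε.2 (min_le_right _ _)
    have hmem : ∀ {x y : ℝ}, x ∈ Set.Icc ε u → y ∈ Set.Icc ε v → ((x, y) : ℝ × ℝ) ∈ s :=
      fun hx hy => ⟨⟨hε0.trans_le hx.1, hx.2.trans_lt huU⟩,
        ⟨hε0.trans_le hy.1, hy.2.trans_lt hvV⟩⟩
    -- FTC in the first variable
    have hFTCx : ∀ y ∈ Set.Icc ε v,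
        ∫ x in ε..u, Efun k Λ r Ω Tuv S (x, y) = pd2 (Gfun r Ω) (u, y) - pd2 (Gfun r Ω) (ε, y) := by
      intro y hy
      apply intervalIntegral.integral_eq_sub_of_hasDerivAt
      · intro x hx
        rw [Set.uIcc_of_le hεu.le] at hx
        have hxs : ((x, y) : ℝ × ℝ) ∈ s := hmem hx hy
        have hd := hasDerivAt_pd1_pd2 hsopen hxs hGs
        rwa [hEeq _ hxs] at hd
      · apply ContinuousOn.intervalIntegrable
        have hmap : Set.MapsTo (fun x : ℝ => ((x, y) : ℝ × ℝ)) (Set.uIcc ε u) (rect U V) := by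
          rw [Set.uIcc_of_le hεu.le]
          exact fun x hx => hssub (hmem hx hy)
        exact hEc.comp ((continuous_id.prodMk continuous_const).continuousOn) hmap
    -- continuity and integrability of pd2 G along vertical lines
    have hpd2Gc : ContinuousOn (pd2 (Gfun r Ω)) s := (pd2_contDiffOn hsopen hGs).continuousOn
    have hcontu : ContinuousOn (fun y => pd2 (Gfun r Ω) (u, y)) (Set.Icc ε v) :=
      hpd2Gc.comp ((continuous_const.prodMk continuous_id).continuousOn)
        (fun y hy => hmem ⟨hεu.le, le_rfl⟩ hy)
    have hcontε : ContinuousOn (fun y => pd2 (Gfun r Ω) (ε, y)) (Set.Icc ε v) :=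
      hpd2Gc.comp ((continuous_const.prodMk continuous_id).continuousOn)
        (fun y hy => hmem ⟨le_rfl, hεu.le⟩ hy)
    have hIntu : IntervalIntegrable (fun y => pd2 (Gfun r Ω) (u, y)) volume ε v := by
      apply ContinuousOn.intervalIntegrable; rwa [Set.uIcc_of_le hεv.le]
    have hIntε : IntervalIntegrable (fun y => pd2 (Gfun r Ω) (ε, y)) volume ε v := by
      apply ContinuousOn.intervalIntegrable; rwa [Set.uIcc_of_le hεv.le]
    -- FTC in the second variable
    have hGu : ∫ y in ε..v, pd2 (Gfun r Ω) (u, y) = Gfun r Ω (u, v) - Gfun r Ω (u, ε) := by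
      apply intervalIntegral.integral_eq_sub_of_hasDerivAt
      · intro y hy
        rw [Set.uIcc_of_le hεv.le] at hy
        exact hasDerivAt_pd2 (hGd (u, y) (hmem ⟨hεu.le, le_rfl⟩ hy))
      · exact hIntu
    have hGε : ∫ y in ε..v, pd2 (Gfun r Ω) (ε, y) = Gfun r Ω (ε, v) - Gfun r Ω (ε, ε) := by
      apply intervalIntegral.integral_eq_sub_of_hasDerivAt
      · intro y hy
        rw [Set.uIcc_of_le hεv.le] at hy
        exact hasDerivAt_pd2 (hGd (ε, y) (hmem ⟨le_rfl, hεu.le⟩ hy))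
      · exact hIntε
    -- combine
    have hA : ∫ y in ε..v, (pd2 (Gfun r Ω) (u, y) - pd2 (Gfun r Ω) (ε, y)) =
        (Gfun r Ω (u, v) - Gfun r Ω (u, ε)) - (Gfun r Ω (ε, v) - Gfun r Ω (ε, ε)) := by
      rw [intervalIntegral.integral_sub hIntu hIntε, hGu, hGε]
    have hA2 : ∫ y in ε..v, (pd2 (Gfun r Ω) (u, y) - pd2 (Gfun r Ω) (ε, y)) =
        ∫ y in ε..v, ∫ x in ε..u, Efun k Λ r Ω Tuv S (x, y) := by
      apply intervalIntegral.integral_congr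
      intro y hy
      rw [Set.uIcc_of_le hεv.le] at hy
      exact (hFTCx y hy).symm
    -- product-measure bookkeeping
    set Q : Set (ℝ × ℝ) := Set.Ioc ε u ×ˢ Set.Ioc ε v with hQdef
    set Q₀ : Set (ℝ × ℝ) := Set.Ioc 0 U ×ˢ Set.Ioc 0 V with hQ₀def
    have hQsub : Q ⊆ Q₀ :=
      Set.prod_mono (Set.Ioc_subset_Ioc hε0.le huU.le) (Set.Ioc_subset_Ioc hε0.le hvV.le)
    have hQ₀rect : Q₀ ⊆ rect U V :=
      Set.prod_mono Set.Ioc_subset_Icc_self Set.Ioc_subset_Icc_self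
    have hEint : IntegrableOn (Efun k Λ r Ω Tuv S) Q₀ :=
      (hEc.integrableOn_compact hcpt).mono_set hQ₀rect
    have hWint : IntegrableOn (fun z : ℝ × ℝ => Ω z ^ 2) Q₀ :=
      ((hΩc.pow 2).integrableOn_compact hcpt).mono_set hQ₀rect
    have hvolQ : ((volume : Measure ℝ).restrict (Set.Ioc ε u)).prod
        ((volume : Measure ℝ).restrict (Set.Ioc ε v)) = (volume : Measure (ℝ × ℝ)).restrict Q := by
      rw [Measure.prod_restrict, ← Measure.volume_eq_prod]
    have hvolQ₀ : ((volume : Measure ℝ).restrict (Set.Ioc 0 U)).prod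
        ((volume : Measure ℝ).restrict (Set.Ioc 0 V)) = (volume : Measure (ℝ × ℝ)).restrict Q₀ := by
      rw [Measure.prod_restrict, ← Measure.volume_eq_prod]
    have hintQ : Integrable (Function.uncurry fun x y => Efun k Λ r Ω Tuv S (x, y))
        (((volume : Measure ℝ).restrict (Set.Ioc ε u)).prod
          ((volume : Measure ℝ).restrict (Set.Ioc ε v))) := by
      rw [hvolQ]; exact hEint.mono_set hQsub
    have hstep : ∫ y in ε..v, ∫ x in ε..u, Efun k Λ r Ω Tuv S (x, y) =
        ∫ z in Q, Efun k Λ r Ω Tuv S z := by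
      rw [intervalIntegral.integral_of_le hεv.le]
      simp_rw [intervalIntegral.integral_of_le hεu.le]
      calc ∫ y in Set.Ioc ε v, ∫ x in Set.Ioc ε u, Efun k Λ r Ω Tuv S (x, y)
          = ∫ x, (∫ y, Efun k Λ r Ω Tuv S (x, y)
              ∂((volume : Measure ℝ).restrict (Set.Ioc ε v)))
              ∂((volume : Measure ℝ).restrict (Set.Ioc ε u)) :=
            (MeasureTheory.integral_integral_swap hintQ).symm
        _ = ∫ z, Efun k Λ r Ω Tuv S z
              ∂(((volume : Measure ℝ).restrict (Set.Ioc ε u)).prod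
                ((volume : Measure ℝ).restrict (Set.Ioc ε v))) :=
            (MeasureTheory.integral_prod _ hintQ).symm
        _ = ∫ z in Q, Efun k Λ r Ω Tuv S z := by rw [hvolQ]
    have hintW0 : Integrable (fun z : ℝ × ℝ => Ω z ^ 2)
        (((volume : Measure ℝ).restrict (Set.Ioc 0 U)).prod
          ((volume : Measure ℝ).restrict (Set.Ioc 0 V))) := by
      rw [hvolQ₀]; exact hWint
    have hW0 : ∫ z in Q₀, Ω z ^ 2 = ∫ x in (0:ℝ)..U, ∫ y in (0:ℝ)..V, Ω (x, y) ^ 2 := by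
      rw [intervalIntegral.integral_of_le hU.le]
      simp_rw [intervalIntegral.integral_of_le hV.le]
      rw [← hvolQ₀]
      exact MeasureTheory.integral_prod _ hintW0
    have hbound : ∫ z in Q, Efun k Λ r Ω Tuv S z ≤ M * B := by
      calc ∫ z in Q, Efun k Λ r Ω Tuv S z
          ≤ ∫ z in Q, M * Ω z ^ 2 := by
            apply setIntegral_mono_on (hEint.mono_set hQsub)
              ((hWint.mono_set hQsub).const_mul M)
              (measurableSet_Ioc.prod measurableSet_Ioc)
            exact fun z hz => hEle z (hQ₀rect (hQsub hz))
        _ = M * ∫ z in Q, Ω z ^ 2 := integral_const_mul M _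
        _ ≤ M * ∫ z in Q₀, Ω z ^ 2 := by
            apply mul_le_mul_of_nonneg_left _ hM
            exact setIntegral_mono_set hWint (Filter.Eventually.of_forall fun z => sq_nonneg _)
              hQsub.eventuallyLE
        _ = M * ∫ x in (0:ℝ)..U, ∫ y in (0:ℝ)..V, Ω (x, y) ^ 2 := by rw [hW0]
        _ ≤ M * B := mul_le_mul_of_nonneg_left hBint hM
    have := hA.symm.trans (hA2.trans hstep)
    linarith [hbound, this.symm.le, this.le]
  -- pass to the limit ε → 0⁺
  have hGfin : Gfun r Ω (u, v) ≤ Gfun r Ω (u, 0) + Gfun r Ω (0, v) - Gfun r Ω (0, 0) + M * B := by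
    have htv : ∀ (a b : ℝ → ℝ), Continuous a → Continuous b →
        ∀ (p₀ : ℝ × ℝ), p₀ ∈ rect U V → (∀ ε ∈ Set.Ioo (0:ℝ) (min u v), ((a ε, b ε) : ℝ × ℝ) ∈ rect U V) →
        (a 0, b 0) = p₀ →
        Filter.Tendsto (fun ε : ℝ => Gfun r Ω (a ε, b ε)) (nhdsWithin 0 (Set.Ioi 0))
          (nhds (Gfun r Ω p₀)) := by
      intro a b ha hb p₀ hp₀ hin heq
      have h1 : Filter.Tendsto (fun ε : ℝ => ((a ε, b ε) : ℝ × ℝ)) (nhdsWithin 0 (Set.Ioi 0))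
          (nhdsWithin p₀ (rect U V)) := by
        apply tendsto_nhdsWithin_of_tendsto_nhds_of_eventually_within
        · have h0 : Filter.Tendsto (fun ε : ℝ => ((a ε, b ε) : ℝ × ℝ)) (nhds 0) (nhds p₀) := by
            rw [← heq]; exact (ha.prodMk hb).tendsto 0
          exact h0.mono_left nhdsWithin_le_nhds
        · exact Filter.eventually_of_mem
            (Ioo_mem_nhdsGT_of_mem ⟨le_rfl, lt_min hu0 hv0⟩) (fun ε hε => hin ε hε)
      exact (hGc p₀ hp₀).tendsto.comp h1
    have hT1 := htv (fun _ => u) id continuous_const continuous_id ((u, 0)) hmem_u0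
      (fun ε hε => ⟨⟨hu0.le, huU.le⟩, ⟨hε.1.le, ((hε.2.trans_le (min_le_right _ _)).trans hvV).le⟩⟩) rfl
    have hT2 := htv id (fun _ => v) continuous_id continuous_const ((0, v)) hmem_0v
      (fun ε hε => ⟨⟨hε.1.le, ((hε.2.trans_le (min_le_left _ _)).trans huU).le⟩, ⟨hv0.le, hvV.le⟩⟩) rfl
    have hT3 := htv id id continuous_id continuous_id ((0, 0)) hmem_00
      (fun ε hε => ⟨⟨hε.1.le, ((hε.2.trans_le (min_le_left _ _)).trans huU).le⟩,
        ⟨hε.1.le, ((hε.2.trans_le (min_le_right _ _)).trans hvV).le⟩⟩) rfl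
    have hΦ : Filter.Tendsto
        (fun ε : ℝ => Gfun r Ω (u, ε) + Gfun r Ω (ε, v) - Gfun r Ω (ε, ε) + M * B)
        (nhdsWithin 0 (Set.Ioi 0))
        (nhds (Gfun r Ω (u, 0) + Gfun r Ω (0, v) - Gfun r Ω (0, 0) + M * B)) :=
      ((hT1.add hT2).sub hT3).add_const (M * B)
    have heven : ∀ᶠ ε in nhdsWithin 0 (Set.Ioi 0),
        Gfun r Ω (u, v) ≤ Gfun r Ω (u, ε) + Gfun r Ω (ε, v) - Gfun r Ω (ε, ε) + M * B :=
      Filter.eventually_of_mem (Ioo_mem_nhdsGT_of_mem ⟨le_rfl, lt_min hu0 hv0⟩)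
        (fun ε hε => hkey ε hε)
    exact ge_of_tendsto hΦ heven
  -- unravel and conclude
  have hGval : ∀ z : ℝ × ℝ, Gfun r Ω z = Real.log (Ω z ^ 2) + Real.log (r z) := by
    intro z
    simp only [Gfun, Real.log_pow]
    push_cast
    ring
  have hlr : ∀ z ∈ rect U V, Real.log (r z) ≤ Real.log R :=
    fun z hz => Real.log_le_log (hrpos z hz) (hrbd z hz).2
  have hlr0 : ∀ z ∈ rect U V, Real.log r₀ ≤ Real.log (r z) :=
    fun z hz => Real.log_le_log hr₀ (hrbd z hz).1
  have hd1 := abs_le.mp (hdataU u ⟨hu0.le, huU.le⟩)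
  have hd2 := abs_le.mp (hdataV v ⟨hv0.le, hvV.le⟩)
  have hd3 := abs_le.mp (hdataU 0 ⟨le_rfl, hU.le⟩)
  have e1 := hGval (u, v); have e2 := hGval (u, 0); have e3 := hGval (0, v)
  have e4 := hGval (0, 0)
  have l1 := hlr _ hmem_u0; have l2 := hlr _ hmem_0v
  have l3 := hlr0 _ hmem_00; have l4 := hlr0 _ hmem_uv
  linarith [hGfin]
end

section
/- Fix constants k ∈ ℝ and Λ ≤ 0. Let W ⊆ ℝ² be open, let r, Ω : W → ℝ be C² with r > 0 and Ω > 0, and let T_uv, T_uu, T_vv : W → ℝ be functions such that on W (writing ν = ∂_u r, λ = ∂_v r): (evol1) ∂_u∂_v r = −kΩ²/(4r) − r⁻¹νλ + 4πr T_uv + (1/4)rΩ²Λ; (const2) ∂_u(Ω⁻²ν) = −4πr T_uu Ω⁻²; (const1) ∂_v(Ω⁻²λ) = −4πr T_vv Ω⁻². Define m := (r/2)(k + 4Ω⁻²νλ). Suppose at a point p ∈ W: ν(p)·λ(p) > 0, T_uu(p) ≥ 0, T_vv(p) ≥ 0, and T_uv(p) ≤ √(T_uu(p)·T_vv(p)).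 Then −ν(p)⁻¹·∂_u m(p) − λ(p)⁻¹·∂_v m(p) ≥ −r(p)²·Λ ≥ 0. -/
open Real Filter Topology

lemma hasDerivAt_slice1 {f : ℝ × ℝ → ℝ} {p : ℝ × ℝ} (hf : DifferentiableAt ℝ f p) :
    HasDerivAt (fun x => f (x, p.2)) (fderiv ℝ f p (1, 0)) p.1 := by
  have h1 : HasDerivAt (fun x : ℝ => (x, p.2)) ((1 : ℝ), (0 : ℝ)) p.1 :=
    (hasDerivAt_id p.1).prodMk (hasDerivAt_const p.1 p.2)
  exact hf.hasFDerivAt.comp_hasDerivAt p.1 h1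

lemma hasDerivAt_slice2 {f : ℝ × ℝ → ℝ} {p : ℝ × ℝ} (hf : DifferentiableAt ℝ f p) :
    HasDerivAt (fun y => f (p.1, y)) (fderiv ℝ f p (0, 1)) p.2 := by
  have h1 : HasDerivAt (fun y : ℝ => (p.1, y)) ((0 : ℝ), (1 : ℝ)) p.2 :=
    (hasDerivAt_const p.2 p.1).prodMk (hasDerivAt_id p.2)
  exact hf.hasFDerivAt.comp_hasDerivAt p.2 h1

lemma hasDerivAt_pd1_s9 {f : ℝ × ℝ → ℝ} {p : ℝ × ℝ} (hf : DifferentiableAt ℝ f p) :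
    HasDerivAt (fun x => f (x, p.2)) (pd1 f p) p.1 := by
  have h := hasDerivAt_slice1 hf
  rwa [show pd1 f p = fderiv ℝ f p (1, 0) from h.deriv]

lemma hasDerivAt_pd2_s9 {f : ℝ × ℝ → ℝ} {p : ℝ × ℝ} (hf : DifferentiableAt ℝ f p) :
    HasDerivAt (fun y => f (p.1, y)) (pd2 f p) p.2 := by
  have h := hasDerivAt_slice2 hf
  rwa [show pd2 f p = fderiv ℝ f p (0, 1) from h.deriv]


set_option maxHeartbeats 1600000 in
/-- The key computation of Proposition 9.2 (otherprop): with `Λ ≤ 0`, the Hawking mass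
`m = (r/2)(k + 4Ω⁻²νλ)` is monotone nondecreasing along the past-pointing timelike
vector field `T = −(ν⁻¹∂_u + λ⁻¹∂_v)`. -/
theorem hawking_mass_timelike_monotonicity
    (k Λ : ℝ) (hΛ : Λ ≤ 0) (W : Set (ℝ × ℝ)) (hW : IsOpen W)
    (r Ω Tuv Tuu Tvv : ℝ × ℝ → ℝ)
    (hr : ContDiffOn ℝ 2 r W) (hΩ : ContDiffOn ℝ 2 Ω W)
    (hrpos : ∀ p ∈ W, 0 < r p) (hΩpos : ∀ p ∈ W, 0 < Ω p)
    (hevol1 : ∀ p ∈ W, pd1 (pd2 r) p =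
      -(k * Ω p ^ 2) / (4 * r p) - (r p)⁻¹ * pd1 r p * pd2 r p
        + 4 * π * r p * Tuv p + (1 / 4) * r p * Ω p ^ 2 * Λ)
    (hconst2 : ∀ p ∈ W, pd1 (fun q => (Ω q ^ 2)⁻¹ * pd1 r q) p =
      -(4 * π * r p * Tuu p * (Ω p ^ 2)⁻¹))
    (hconst1 : ∀ p ∈ W, pd2 (fun q => (Ω q ^ 2)⁻¹ * pd2 r q) p =
      -(4 * π * r p * Tvv p * (Ω p ^ 2)⁻¹))
    (p : ℝ × ℝ) (hp : p ∈ W)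
    (hnulam : 0 < pd1 r p * pd2 r p)
    (hTuu : 0 ≤ Tuu p) (hTvv : 0 ≤ Tvv p)
    (hTuv : Tuv p ≤ Real.sqrt (Tuu p * Tvv p)) :
    -(pd1 r p)⁻¹ *
        pd1 (fun q => r q / 2 * (k + 4 * (Ω q ^ 2)⁻¹ * pd1 r q * pd2 r q)) p
      - (pd2 r p)⁻¹ *
        pd2 (fun q => r q / 2 * (k + 4 * (Ω q ^ 2)⁻¹ * pd1 r q * pd2 r q)) p
      ≥ -(r p ^ 2) * Λ ∧ -(r p ^ 2) * Λ ≥ 0 := by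
  obtain ⟨u, v⟩ := p
  have hWp : W ∈ 𝓝 ((u, v) : ℝ × ℝ) := hW.mem_nhds hp
  have hmem : ∀ᶠ q in 𝓝 ((u, v) : ℝ × ℝ), q ∈ W := hWp
  have hrdiff : ∀ᶠ q in 𝓝 ((u, v) : ℝ × ℝ), DifferentiableAt ℝ r q := by
    filter_upwards [hmem] with q hq
    exact (hr.contDiffAt (hW.mem_nhds hq)).differentiableAt two_ne_zero
  have hrp : DifferentiableAt ℝ r (u, v) := hrdiff.self_of_nhds
  have hΩdiff : DifferentiableAt ℝ Ω (u, v) := (hΩ.contDiffAt hWp).differentiableAt two_ne_zero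
  set F := fderiv ℝ r with hF
  have hFc : ContDiffAt ℝ 1 F (u, v) := (hr.contDiffAt hWp).fderiv_right (by norm_num)
  have hFd : DifferentiableAt ℝ F (u, v) := hFc.differentiableAt one_ne_zero
  have hpd1e : pd1 r =ᶠ[𝓝 ((u, v) : ℝ × ℝ)] fun q => F q (1, 0) := by
    filter_upwards [hrdiff] with q hq
    exact (hasDerivAt_slice1 hq).deriv
  have hpd2e : pd2 r =ᶠ[𝓝 ((u, v) : ℝ × ℝ)] fun q => F q (0, 1) := by
    filter_upwards [hrdiff] with q hq
    exact (hasDerivAt_slice2 hq).deriv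
  have hd1 : DifferentiableAt ℝ (pd1 r) (u, v) :=
    (hFd.clm_apply (differentiableAt_const _)).congr_of_eventuallyEq hpd1e
  have hd2 : DifferentiableAt ℝ (pd2 r) (u, v) :=
    (hFd.clm_apply (differentiableAt_const _)).congr_of_eventuallyEq hpd2e
  -- Clairaut
  have hsymm : fderiv ℝ F (u, v) (1, 0) (0, 1) = fderiv ℝ F (u, v) (0, 1) (1, 0) := by
    apply second_derivative_symmetric_of_eventually (f := r) ?_ hFd.hasFDerivAt
    filter_upwards [hrdiff] with q hq
    exact hq.hasFDerivAt
  have hd21 : pd2 (pd1 r) (u, v) = fderiv ℝ F (u, v) (0, 1) (1, 0) := by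
    have h1 : pd2 (pd1 r) (u, v) = fderiv ℝ (pd1 r) (u, v) (0, 1) :=
      (hasDerivAt_slice2 hd1).deriv
    rw [h1, hpd1e.fderiv_eq, fderiv_clm_apply hFd (differentiableAt_const _)]
    simp
  have hd12 : pd1 (pd2 r) (u, v) = fderiv ℝ F (u, v) (1, 0) (0, 1) := by
    have h1 : pd1 (pd2 r) (u, v) = fderiv ℝ (pd2 r) (u, v) (1, 0) :=
      (hasDerivAt_slice1 hd2).deriv
    rw [h1, hpd2e.fderiv_eq, fderiv_clm_apply hFd (differentiableAt_const _)]
    simp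
  have hclair : pd2 (pd1 r) (u, v) = pd1 (pd2 r) (u, v) := by rw [hd21, hd12, hsymm]
  -- basic positivity facts
  have hΩ0 : (0 : ℝ) < Ω (u, v) := hΩpos _ hp
  have hr0 : (0 : ℝ) < r (u, v) := hrpos _ hp
  have hΩne : Ω (u, v) ^ 2 ≠ 0 := pow_ne_zero 2 hΩ0.ne'
  have hAdiff : DifferentiableAt ℝ (fun q => (Ω q ^ 2)⁻¹) (u, v) :=
    (hΩdiff.pow 2).inv hΩne
  -- HasDerivAt for slices
  have hRu : HasDerivAt (fun x => r (x, v)) (pd1 r (u, v)) u := hasDerivAt_pd1_s9 hrp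
  have hRv : HasDerivAt (fun y => r (u, y)) (pd2 r (u, v)) v := hasDerivAt_pd2_s9 hrp
  have hAu : HasDerivAt (fun x => (Ω (x, v) ^ 2)⁻¹) (pd1 (fun q => (Ω q ^ 2)⁻¹) (u, v)) u :=
    hasDerivAt_pd1_s9 hAdiff
  have hAv : HasDerivAt (fun y => (Ω (u, y) ^ 2)⁻¹) (pd2 (fun q => (Ω q ^ 2)⁻¹) (u, v)) v :=
    hasDerivAt_pd2_s9 hAdiff
  have hNu : HasDerivAt (fun x => pd1 r (x, v)) (pd1 (pd1 r) (u, v)) u := hasDerivAt_pd1_s9 hd1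
  have hNv : HasDerivAt (fun y => pd1 r (u, y)) (pd2 (pd1 r) (u, v)) v := hasDerivAt_pd2_s9 hd1
  have hLu : HasDerivAt (fun x => pd2 r (x, v)) (pd1 (pd2 r) (u, v)) u := hasDerivAt_pd1_s9 hd2
  have hLv : HasDerivAt (fun y => pd2 r (u, y)) (pd2 (pd2 r) (u, v)) v := hasDerivAt_pd2_s9 hd2
  set nv := pd1 r (u, v) with hnv
  set lv := pd2 r (u, v) with hlv
  set w := (Ω (u, v) ^ 2)⁻¹ with hw
  set rv := r (u, v) with hrv
  set a1 := pd1 (fun q => (Ω q ^ 2)⁻¹) (u, v) with ha1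
  set a2 := pd2 (fun q => (Ω q ^ 2)⁻¹) (u, v) with ha2
  set d11 := pd1 (pd1 r) (u, v) with hd11
  set d22 := pd2 (pd2 r) (u, v) with hd22
  set E := pd1 (pd2 r) (u, v) with hE
  -- constraint equations
  have eC2 : a1 * nv + w * d11 = -(4 * π * rv * Tuu (u, v) * w) := by
    have h := (hAu.fun_mul hNu).deriv
    have h2 := hconst2 (u, v) hp
    rw [show pd1 (fun q => (Ω q ^ 2)⁻¹ * pd1 r q) (u, v)
        = deriv (fun x => (Ω (x, v) ^ 2)⁻¹ * pd1 r (x, v)) u from rfl, h] at h2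
    exact h2
  have eC1 : a2 * lv + w * d22 = -(4 * π * rv * Tvv (u, v) * w) := by
    have h := (hAv.fun_mul hLv).deriv
    have h2 := hconst1 (u, v) hp
    rw [show pd2 (fun q => (Ω q ^ 2)⁻¹ * pd2 r q) (u, v)
        = deriv (fun y => (Ω (u, y) ^ 2)⁻¹ * pd2 r (u, y)) v from rfl, h] at h2
    exact h2
  -- derivative of the mass along u
  have hMu : HasDerivAt
      (fun x => r (x, v) / 2 * (k + 4 * (Ω (x, v) ^ 2)⁻¹ * pd1 r (x, v) * pd2 r (x, v)))
      (nv / 2 * (k + 4 * w * nv * lv)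
        + rv / 2 * ((4 * a1 * nv + 4 * w * d11) * lv + 4 * w * nv * E)) u := by
    have h := (hRu.div_const 2).fun_mul ((((hAu.const_mul 4).fun_mul hNu).fun_mul hLu).const_add k)
    convert h using 1
  have hMv : HasDerivAt
      (fun y => r (u, y) / 2 * (k + 4 * (Ω (u, y) ^ 2)⁻¹ * pd1 r (u, y) * pd2 r (u, y)))
      (lv / 2 * (k + 4 * w * nv * lv)
        + rv / 2 * ((4 * a2 * nv + 4 * w * pd2 (pd1 r) (u, v)) * lv + 4 * w * nv * d22)) v := by
    have h := (hRv.div_const 2).fun_mul ((((hAv.const_mul 4).fun_mul hNv).fun_mul hLv).const_add k)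
    convert h using 1
  have e1 : pd1 (fun q => r q / 2 * (k + 4 * (Ω q ^ 2)⁻¹ * pd1 r q * pd2 r q)) (u, v)
      = nv / 2 * (k + 4 * w * nv * lv)
        + rv / 2 * ((4 * a1 * nv + 4 * w * d11) * lv + 4 * w * nv * E) := hMu.deriv
  have e2 : pd2 (fun q => r q / 2 * (k + 4 * (Ω q ^ 2)⁻¹ * pd1 r q * pd2 r q)) (u, v)
      = lv / 2 * (k + 4 * w * nv * lv)
        + rv / 2 * ((4 * a2 * nv + 4 * w * pd2 (pd1 r) (u, v)) * lv + 4 * w * nv * d22) :=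
    hMv.deriv
  have hEval : E = -(k * Ω (u, v) ^ 2) / (4 * rv) - rv⁻¹ * nv * lv
      + 4 * π * rv * Tuv (u, v) + 1 / 4 * rv * Ω (u, v) ^ 2 * Λ := hevol1 (u, v) hp
  have hnne : nv ≠ 0 := by
    rintro h; rw [h] at hnulam; simp at hnulam
  have hlne : lv ≠ 0 := by
    rintro h; rw [h] at hnulam; simp at hnulam
  have key : 2 * Tuv (u, v) * (nv * lv) ≤ Tuu (u, v) * lv ^ 2 + Tvv (u, v) * nv ^ 2 := by
    have h2 := two_mul_le_add_sq (Real.sqrt (Tuu (u, v)) * |lv|) (Real.sqrt (Tvv (u, v)) * |nv|)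
    have ha : Real.sqrt (Tuu (u, v)) ^ 2 = Tuu (u, v) := Real.sq_sqrt hTuu
    have hb : Real.sqrt (Tvv (u, v)) ^ 2 = Tvv (u, v) := Real.sq_sqrt hTvv
    have habs : |lv| * |nv| = nv * lv := by
      rw [← abs_mul, abs_of_pos (by nlinarith [hnulam] : (0:ℝ) < lv * nv)]
      ring
    have hmul : Real.sqrt (Tuu (u, v)) * Real.sqrt (Tvv (u, v))
        = Real.sqrt (Tuu (u, v) * Tvv (u, v)) := (Real.sqrt_mul hTuu _).symm
    have h3 : Tuv (u, v) * (nv * lv) ≤ Real.sqrt (Tuu (u, v) * Tvv (u, v)) * (nv * lv) :=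
      mul_le_mul_of_nonneg_right hTuv hnulam.le
    calc 2 * Tuv (u, v) * (nv * lv)
        ≤ 2 * (Real.sqrt (Tuu (u, v) * Tvv (u, v)) * (nv * lv)) := by linarith
      _ = 2 * (Real.sqrt (Tuu (u, v)) * |lv|) * (Real.sqrt (Tvv (u, v)) * |nv|) := by
          rw [← hmul, ← habs]; ring
      _ ≤ (Real.sqrt (Tuu (u, v)) * |lv|) ^ 2 + (Real.sqrt (Tvv (u, v)) * |nv|) ^ 2 := h2
      _ = Tuu (u, v) * lv ^ 2 + Tvv (u, v) * nv ^ 2 := by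
          rw [mul_pow, mul_pow, ha, hb, sq_abs, sq_abs]
  have hmain : -(nv)⁻¹ * pd1 (fun q => r q / 2 * (k + 4 * (Ω q ^ 2)⁻¹ * pd1 r q * pd2 r q)) (u, v)
      - (lv)⁻¹ * pd2 (fun q => r q / 2 * (k + 4 * (Ω q ^ 2)⁻¹ * pd1 r q * pd2 r q)) (u, v)
      = -(rv ^ 2) * Λ + 8 * π * rv ^ 2 * (Ω (u, v) ^ 2)⁻¹ * (nv * lv)⁻¹ *
          (Tuu (u, v) * lv ^ 2 + Tvv (u, v) * nv ^ 2 - 2 * Tuv (u, v) * (nv * lv)) := by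
    rw [e1, e2, hclair, hEval, hw]
    have hone : w * Ω (u, v) ^ 2 = 1 := inv_mul_cancel₀ hΩne
    have hC2 : d11 = ((-(4 * π * rv * Tuu (u, v) * w)) - a1 * nv) * Ω (u, v) ^ 2 := by
      linear_combination Ω (u, v) ^ 2 * eC2 - d11 * hone
    have hC1 : d22 = ((-(4 * π * rv * Tvv (u, v) * w)) - a2 * lv) * Ω (u, v) ^ 2 := by
      linear_combination Ω (u, v) ^ 2 * eC1 - d22 * hone
    rw [hC2, hC1, hw]
    field_simp
    ring
  constructor
  · rw [hmain]
    have hkey' : 0 ≤ 8 * π * rv ^ 2 * (Ω (u, v) ^ 2)⁻¹ * (nv * lv)⁻¹ *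
        (Tuu (u, v) * lv ^ 2 + Tvv (u, v) * nv ^ 2 - 2 * Tuv (u, v) * (nv * lv)) := by
      have h1 : (0:ℝ) ≤ 8 * π * rv ^ 2 * (Ω (u, v) ^ 2)⁻¹ * (nv * lv)⁻¹ := by positivity
      exact mul_nonneg h1 (by linarith [key])
    linarith
  · nlinarith [sq_nonneg rv, hΛ]
end

section
/- Let c > 0, R > 0 and a < b be real numbers, and let y : [a,b] → ℝ be C¹ with y(a) ≥ 2R and, for all u ∈ [a,b], (d/du)(y(u)²) ≥ (2/3)·c·( y(u)³ − R³ ). Then b − a ≤ 24 / ( 7·c·y(a) ). -/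
/-- The differential inequality (difeq) of Proposition 8.7: if `(y²)' ≥ (2/3)c(y³ − R³)`
on `[a,b]` with `y(a) ≥ 2R`, then `b − a ≤ 24/(7 c y(a))` (the blow-up time tends to `0`
as `y(a) → ∞`). -/
theorem blowup_time_bound
    (c R a b : ℝ) (hc : 0 < c) (hR : 0 < R) (hab : a < b)
    (y y' : ℝ → ℝ)
    (hderiv : ∀ u ∈ Set.Icc a b, HasDerivWithinAt y (y' u) (Set.Icc a b) u)
    (hcont : ContinuousOn y' (Set.Icc a b))
    (hy0 : 2 * R ≤ y a)
    (hineq : ∀ u ∈ Set.Icc a b, 2 / 3 * c * (y u ^ 3 - R ^ 3) ≤ 2 * y u * y' u) :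
    b - a ≤ 24 / (7 * c * y a) := by
  have hya : (0:ℝ) < y a := lt_of_lt_of_le (by linarith) hy0
  have hycont : ContinuousOn y (Set.Icc a b) := fun u hu => (hderiv u hu).continuousWithinAt
  -- key monotonicity lemma
  have key : ∀ t ∈ Set.Icc a b, (∀ v ∈ Set.Ico a t, R ≤ y v) → y a ≤ y t := by
    intro t ht hge
    rcases eq_or_lt_of_le ht.1 with h | hat
    · rw [← h]
    have hsub : Set.Icc a t ⊆ Set.Icc a b := Set.Icc_subset_Icc le_rfl ht.2
    have hz : MonotoneOn (fun u => y u ^ 2) (Set.Icc a t) := by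
      apply monotoneOn_of_deriv_nonneg (convex_Icc a t) ((hycont.mono hsub).pow 2)
      · intro x hx
        rw [interior_Icc] at hx
        have hxab : Set.Icc a b ∈ nhds x := Icc_mem_nhds hx.1 (lt_of_lt_of_le hx.2 ht.2)
        exact (((hderiv x ⟨hx.1.le, hx.2.le.trans ht.2⟩).pow 2).hasDerivAt hxab).differentiableAt.differentiableWithinAt
      · intro x hx
        rw [interior_Icc] at hx
        have hxm : x ∈ Set.Icc a b := ⟨hx.1.le, hx.2.le.trans ht.2⟩
        have hxab : Set.Icc a b ∈ nhds x := Icc_mem_nhds hx.1 (lt_of_lt_of_le hx.2 ht.2)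
        have hd := ((hderiv x hxm).pow 2).hasDerivAt hxab
        rw [hd.deriv]
        have h1 := hineq x hxm
        have h2 : R ≤ y x := hge x ⟨hx.1.le, hx.2⟩
        have h3 : R ^ 3 ≤ y x ^ 3 := pow_le_pow_left₀ hR.le h2 3
        push_cast
        nlinarith
    have hmono := hz ⟨le_rfl, ht.1⟩ ⟨ht.1, le_rfl⟩ ht.1
    simp only at hmono
    -- y t ≥ R by continuity
    have hnb : (nhdsWithin t (Set.Ico a t)).NeBot := by
      rw [← mem_closure_iff_nhdsWithin_neBot, closure_Ico hat.ne]
      exact ⟨ht.1, le_rfl⟩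
    have hct : ContinuousWithinAt y (Set.Ico a t) t :=
      (hycont t ht).mono (fun v hv => ⟨hv.1, hv.2.le.trans ht.2⟩)
    have hyt : R ≤ y t := by
      refine ge_of_tendsto hct.tendsto ?_
      filter_upwards [self_mem_nhdsWithin] with v hv using hge v hv
    nlinarith
  -- y stays above 3R/2
  have H2 : ∀ u ∈ Set.Icc a b, 3 / 2 * R < y u := by
    by_contra hcon
    push_neg at hcon
    obtain ⟨u₁, hu₁, hle⟩ := hcon
    set S : Set ℝ := Set.Icc a b ∩ y ⁻¹' Set.Iic (3 / 2 * R) with hS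
    have hSclosed : IsClosed S := hycont.preimage_isClosed_of_isClosed isClosed_Icc isClosed_Iic
    have hSne : S.Nonempty := ⟨u₁, hu₁, hle⟩
    have hSbdd : BddBelow S := ⟨a, fun v hv => hv.1.1⟩
    have hmem : sInf S ∈ S := hSclosed.csInf_mem hSne hSbdd
    have hu₀ : sInf S ∈ Set.Icc a b := hmem.1
    have hky := key (sInf S) hu₀ (fun v hv => by
      have hvS : v ∉ S := notMem_of_lt_csInf hv.2 hSbdd
      have hvm : v ∈ Set.Icc a b := ⟨hv.1, hv.2.le.trans hu₀.2⟩
      have : ¬ y v ≤ 3 / 2 * R := fun h => hvS ⟨hvm, h⟩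
      linarith)
    have := hmem.2
    simp only [Set.mem_preimage, Set.mem_Iic] at this
    linarith
  have hmono : ∀ u ∈ Set.Icc a b, y a ≤ y u := fun u hu =>
    key u hu (fun v hv => by
      have := H2 v ⟨hv.1, hv.2.le.trans hu.2⟩; linarith)
  -- antitone auxiliary function
  set f : ℝ → ℝ := fun u => (y u)⁻¹ + 7 / 24 * c * u with hf
  have hfa : AntitoneOn f (Set.Icc a b) := by
    apply antitoneOn_of_deriv_nonpos (convex_Icc a b)
    · apply ContinuousOn.add
      · exact ContinuousOn.inv₀ hycont (fun u hu => (lt_of_lt_of_le hya (hmono u hu)).ne')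
      · exact (continuous_const.mul continuous_id).continuousOn
    · intro x hx
      rw [interior_Icc] at hx
      have hxm : x ∈ Set.Icc a b := ⟨hx.1.le, hx.2.le⟩
      have hxab : Set.Icc a b ∈ nhds x := Icc_mem_nhds hx.1 hx.2
      have hyx : 0 < y x := lt_of_lt_of_le hya (hmono x hxm)
      have hd1 : HasDerivAt (fun u => (y u)⁻¹) (-(y' x) / (y x) ^ 2) x :=
        ((hderiv x hxm).hasDerivAt hxab).inv hyx.ne'
      have hd2 : HasDerivAt (fun u => 7 / 24 * c * u) (7 / 24 * c) x := by
        simpa using (hasDerivAt_id x).const_mul (7 / 24 * c)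
      exact (hd1.add hd2).differentiableAt.differentiableWithinAt
    · intro x hx
      rw [interior_Icc] at hx
      have hxm : x ∈ Set.Icc a b := ⟨hx.1.le, hx.2.le⟩
      have hxab : Set.Icc a b ∈ nhds x := Icc_mem_nhds hx.1 hx.2
      have hyx2R : 2 * R ≤ y x := le_trans hy0 (hmono x hxm)
      have hyx : 0 < y x := by linarith
      have hd1 : HasDerivAt (fun u => (y u)⁻¹) (-(y' x) / (y x) ^ 2) x :=
        ((hderiv x hxm).hasDerivAt hxab).inv hyx.ne'
      have hd2 : HasDerivAt (fun u => 7 / 24 * c * u) (7 / 24 * c) x := by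
        simpa using (hasDerivAt_id x).const_mul (7 / 24 * c)
      rw [show deriv f x = -(y' x) / (y x) ^ 2 + 7 / 24 * c from (hd1.add hd2).deriv]
      have h1 := hineq x hxm
      have h3 : 8 * R ^ 3 ≤ y x ^ 3 := by
        have h := pow_le_pow_left₀ (by positivity : (0:ℝ) ≤ 2 * R) hyx2R 3
        nlinarith [h]
      have hkey : 7 / 24 * c * (y x) ^ 2 ≤ y' x := by
        nlinarith [h3, hyx.le, mul_pos hc hyx, mul_pos (mul_pos hc hyx) hyx]
      have e : -(y' x) / (y x) ^ 2 + 7 / 24 * c = (7 / 24 * c * (y x) ^ 2 - y' x) / (y x) ^ 2 := by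
        field_simp
        ring
      rw [e]
      exact div_nonpos_of_nonpos_of_nonneg (by linarith) (sq_nonneg _)
  have hba := hfa ⟨le_rfl, hab.le⟩ ⟨hab.le, le_rfl⟩ hab.le
  simp only [hf] at hba
  have hyb : 0 < y b := lt_of_lt_of_le hya (hmono b ⟨hab.le, le_rfl⟩)
  have hinvb : 0 < (y b)⁻¹ := inv_pos.mpr hyb
  have h1 : 7 / 24 * c * (b - a) ≤ (y a)⁻¹ := by linarith
  have h2 : (y a)⁻¹ * y a = 1 := inv_mul_cancel₀ hya.ne'
  rw [le_div_iff₀ (by positivity)]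
  nlinarith [mul_le_mul_of_nonneg_right h1 hya.le]
end

section
/- Fix reals 0 < r₀ ≤ R, K ≥ 0 and v₁ < v₂. Let r : [v₁,v₂] → ℝ be C¹ with r₀ ≤ r ≤ R, write λ := r', let Ω, T : [v₁,v₂] → ℝ be continuous with Ω > 0 and T ≥ 0, suppose the function v ↦ Ω(v)⁻²λ(v) is monotone nonincreasing, and let ν : [v₁,v₂] → ℝ be C¹ with ν < 0 everywhere, satisfying ν'(v) = −Ω(v)²/(4 r(v)) − r(v)⁻¹ λ(v) ν(v) + 4π r(v) T(v) for all v. Define κ := −Ω²/(4ν) and assume ∫_{v₁}^{v₂} κ(v) dv ≤ K. Then |ν(v₂)| ≤ |ν(v₁)| · exp( (2/r₀)·( 2(R − r₀) + K ) ). -/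
open Real MeasureTheory

/-- Key sign-change lemma: if `Ω⁻²λ` is nonincreasing with `Ω > 0` and `r' = λ` with
`r₀ ≤ r ≤ R`, then the total variation `∫ |λ|` is at most `2(R - r₀)`. -/
theorem abs_lam_integral_bound
    (r₀ R v₁ v₂ : ℝ) (hv : v₁ < v₂)
    (r lam Ω : ℝ → ℝ)
    (hrderiv : ∀ v ∈ Set.Icc v₁ v₂, HasDerivWithinAt r (lam v) (Set.Icc v₁ v₂) v)
    (hlamcont : ContinuousOn lam (Set.Icc v₁ v₂))
    (hrbound : ∀ v ∈ Set.Icc v₁ v₂, r₀ ≤ r v ∧ r v ≤ R)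
    (hΩpos : ∀ v ∈ Set.Icc v₁ v₂, 0 < Ω v)
    (hmono : AntitoneOn (fun v => (Ω v ^ 2)⁻¹ * lam v) (Set.Icc v₁ v₂)) :
    (∫ v in v₁..v₂, |lam v|) ≤ 2 * (R - r₀) := by
  classical
  set S : Set ℝ := {v ∈ Set.Icc v₁ v₂ | 0 ≤ lam v} with hS
  set c : ℝ := sSup (insert v₁ S) with hcdef
  have hbdd : BddAbove (insert v₁ S) := by
    refine ⟨v₂, ?_⟩
    rintro x (rfl | hx)
    · exact hv.le
    · exact hx.1.2
  have hne : (insert v₁ S).Nonempty := ⟨v₁, Set.mem_insert _ _⟩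
  have hc₁ : v₁ ≤ c := le_csSup hbdd (Set.mem_insert _ _)
  have hc₂ : c ≤ v₂ := by
    apply csSup_le hne
    rintro x (rfl | hx)
    · exact hv.le
    · exact hx.1.2
  have hrcont : ContinuousOn r (Set.Icc v₁ v₂) := fun v hvI =>
    (hrderiv v hvI).continuousWithinAt
  -- λ ≥ 0 before c
  have hpos : ∀ v ∈ Set.Ico v₁ c, 0 ≤ lam v := by
    intro v hv'
    obtain ⟨w, hw, hvw⟩ := exists_lt_of_lt_csSup hne hv'.2
    have hwc : w ≤ c := le_csSup hbdd hw
    have hvI : v ∈ Set.Icc v₁ v₂ := ⟨hv'.1, le_trans (le_trans hvw.le hwc) hc₂⟩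
    rcases hw with rfl | hw
    · exact absurd hvw (not_lt.2 hv'.1)
    · have hwI : w ∈ Set.Icc v₁ v₂ := hw.1
      have hmw := hmono hvI hwI hvw.le
      have hΩw : (0:ℝ) < Ω w ^ 2 := pow_pos (hΩpos w hwI) 2
      have h0 : 0 ≤ (Ω v ^ 2)⁻¹ * lam v :=
        le_trans (mul_nonneg (inv_nonneg.2 hΩw.le) hw.2) hmw
      have hΩv : (0:ℝ) < Ω v ^ 2 := pow_pos (hΩpos v hvI) 2
      have := mul_nonneg hΩv.le h0
      rwa [← mul_assoc, mul_inv_cancel₀ (ne_of_gt hΩv), one_mul] at this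
  -- λ ≤ 0 after c
  have hneg : ∀ v ∈ Set.Ioc c v₂, lam v ≤ 0 := by
    intro v hv'
    by_contra h
    push_neg at h
    have hvI : v ∈ Set.Icc v₁ v₂ := ⟨le_trans hc₁ hv'.1.le, hv'.2⟩
    have : v ∈ insert v₁ S := Set.mem_insert_of_mem _ ⟨hvI, h.le⟩
    exact absurd (le_csSup hbdd this) (not_le.2 hv'.1)
  have hae : ∀ᵐ x : ℝ, x ≠ c := by
    rw [MeasureTheory.ae_iff]
    simpa using measure_singleton c
  -- FTC on the two pieces
  have hsub1 : Set.Icc v₁ c ⊆ Set.Icc v₁ v₂ := Set.Icc_subset_Icc le_rfl hc₂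
  have hsub2 : Set.Icc c v₂ ⊆ Set.Icc v₁ v₂ := Set.Icc_subset_Icc hc₁ le_rfl
  have hint1 : (∫ v in v₁..c, lam v) = r c - r v₁ := by
    apply intervalIntegral.integral_eq_sub_of_hasDeriv_right_of_le hc₁
      (hrcont.mono hsub1)
    · intro x hx
      have hxI : x ∈ Set.Icc v₁ v₂ := ⟨hx.1.le, le_trans hx.2.le hc₂⟩
      exact ((hrderiv x hxI).hasDerivAt
        (Icc_mem_nhds hx.1 (lt_of_lt_of_le hx.2 hc₂))).hasDerivWithinAt
    · exact ContinuousOn.intervalIntegrable (by rw [Set.uIcc_of_le hc₁]; exact hlamcont.mono hsub1)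
  have hint2 : (∫ v in c..v₂, lam v) = r v₂ - r c := by
    apply intervalIntegral.integral_eq_sub_of_hasDeriv_right_of_le hc₂
      (hrcont.mono hsub2)
    · intro x hx
      have hxI : x ∈ Set.Icc v₁ v₂ := ⟨le_trans hc₁ hx.1.le, hx.2.le⟩
      exact ((hrderiv x hxI).hasDerivAt
        (Icc_mem_nhds (lt_of_le_of_lt hc₁ hx.1) hx.2)).hasDerivWithinAt
    · exact ContinuousOn.intervalIntegrable (by rw [Set.uIcc_of_le hc₂]; exact hlamcont.mono hsub2)
  -- replace |λ| by ±λ on each piece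
  have habs1 : (∫ v in v₁..c, |lam v|) = ∫ v in v₁..c, lam v := by
    apply intervalIntegral.integral_congr_ae
    filter_upwards [hae] with x hx hxI
    rw [Set.uIoc_of_le hc₁] at hxI
    exact abs_of_nonneg (hpos x ⟨hxI.1.le, lt_of_le_of_ne hxI.2 hx⟩)
  have habs2 : (∫ v in c..v₂, |lam v|) = ∫ v in c..v₂, -lam v := by
    apply intervalIntegral.integral_congr_ae
    filter_upwards with x hxI
    rw [Set.uIoc_of_le hc₂] at hxI
    exact abs_of_nonpos (hneg x hxI)
  have hi1 : IntervalIntegrable (fun v => |lam v|) volume v₁ c :=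
    ContinuousOn.intervalIntegrable (by rw [Set.uIcc_of_le hc₁]; exact (hlamcont.mono hsub1).abs)
  have hi2 : IntervalIntegrable (fun v => |lam v|) volume c v₂ :=
    ContinuousOn.intervalIntegrable (by rw [Set.uIcc_of_le hc₂]; exact (hlamcont.mono hsub2).abs)
  have hsplit : (∫ v in v₁..v₂, |lam v|)
      = (∫ v in v₁..c, |lam v|) + ∫ v in c..v₂, |lam v| :=
    (intervalIntegral.integral_add_adjacent_intervals hi1 hi2).symm
  have hb1 := hrbound v₁ ⟨le_rfl, hv.le⟩
  have hb2 := hrbound v₂ ⟨hv.le, le_rfl⟩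
  have hbc := hrbound c ⟨hc₁, hc₂⟩
  rw [hsplit, habs1, habs2, intervalIntegral.integral_neg, hint1, hint2]
  linarith [hb1.1, hb2.1, hbc.2]

/-- The pointwise `ν`-estimate of Section 11: along an ingoing ray with `r₀ ≤ r ≤ R`,
`Ω⁻²λ` nonincreasing, `ν < 0` satisfying
`∂_v ν = −Ω²/(4r) − r⁻¹λν + 4πrT` and `∫ κ ≤ K` (with `κ = −Ω²/(4ν)`), the endpoint
value of `|ν|` is controlled by a Grönwall factor. -/
theorem nu_pointwise_gronwall_bound
    (r₀ R K v₁ v₂ : ℝ) (hr₀ : 0 < r₀) (hrR : r₀ ≤ R) (hK : 0 ≤ K) (hv : v₁ < v₂)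
    (r lam Ω T ν : ℝ → ℝ)
    (hrderiv : ∀ v ∈ Set.Icc v₁ v₂, HasDerivWithinAt r (lam v) (Set.Icc v₁ v₂) v)
    (hlamcont : ContinuousOn lam (Set.Icc v₁ v₂))
    (hrbound : ∀ v ∈ Set.Icc v₁ v₂, r₀ ≤ r v ∧ r v ≤ R)
    (hΩcont : ContinuousOn Ω (Set.Icc v₁ v₂))
    (hΩpos : ∀ v ∈ Set.Icc v₁ v₂, 0 < Ω v)
    (hTcont : ContinuousOn T (Set.Icc v₁ v₂))
    (hT : ∀ v ∈ Set.Icc v₁ v₂, 0 ≤ T v)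
    (hmono : AntitoneOn (fun v => (Ω v ^ 2)⁻¹ * lam v) (Set.Icc v₁ v₂))
    (hνneg : ∀ v ∈ Set.Icc v₁ v₂, ν v < 0)
    (hν : ∀ v ∈ Set.Icc v₁ v₂, HasDerivWithinAt ν
      (-(Ω v ^ 2) / (4 * r v) - (r v)⁻¹ * lam v * ν v + 4 * π * r v * T v)
      (Set.Icc v₁ v₂) v)
    (hκ : (∫ v in v₁..v₂, -(Ω v ^ 2) / (4 * ν v)) ≤ K) :
    |ν v₂| ≤ |ν v₁| * Real.exp (2 / r₀ * (2 * (R - r₀) + K)) := by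
  have hνcont : ContinuousOn ν (Set.Icc v₁ v₂) := fun v hvI => (hν v hvI).continuousWithinAt
  have hrcont : ContinuousOn r (Set.Icc v₁ v₂) := fun v hvI => (hrderiv v hvI).continuousWithinAt
  have hrne : ∀ v ∈ Set.Icc v₁ v₂, r v ≠ 0 := fun v hvI =>
    ne_of_gt (lt_of_lt_of_le hr₀ (hrbound v hvI).1)
  have hνne : ∀ v ∈ Set.Icc v₁ v₂, (4:ℝ) * ν v ≠ 0 := fun v hvI =>
    mul_ne_zero (by norm_num) (ne_of_lt (hνneg v hvI))
  -- the Grönwall coefficient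
  set q : ℝ → ℝ := fun v => (-(Ω v ^ 2) / (4 * ν v) - lam v) / r v with hq
  have hκpos : ∀ v ∈ Set.Icc v₁ v₂, 0 ≤ -(Ω v ^ 2) / (4 * ν v) := by
    intro v hvI
    apply le_of_lt
    apply div_pos_of_neg_of_neg
    · simpa using pow_pos (hΩpos v hvI) 2
    · have := hνneg v hvI; linarith
  have hqcont : ContinuousOn q (Set.Icc v₁ v₂) := by
    apply ContinuousOn.div _ hrcont hrne
    apply ContinuousOn.sub _ hlamcont
    exact ((hΩcont.pow 2).neg).div (continuousOn_const.mul hνcont) hνne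
  set A : ℝ → ℝ := fun v => ∫ t in v₁..v, q t with hA
  have hqint : IntervalIntegrable q volume v₁ v₂ :=
    ContinuousOn.intervalIntegrable (by rw [Set.uIcc_of_le hv.le]; exact hqcont)
  have hAcont : ContinuousOn A (Set.Icc v₁ v₂) := by
    have := intervalIntegral.continuousOn_primitive_interval'
      (μ := volume) (f := q) (b₁ := v₁) (b₂ := v₂) hqint
      (by rw [Set.uIcc_of_le hv.le]; exact Set.left_mem_Icc.2 hv.le)
    rwa [Set.uIcc_of_le hv.le] at this
  have hAderiv : ∀ x ∈ Set.Ioo v₁ v₂, HasDerivAt A (q x) x := by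
    intro x hx
    have hnx : Set.Icc v₁ v₂ ∈ nhds x := Icc_mem_nhds hx.1 hx.2
    have hqi : IntervalIntegrable q volume v₁ x :=
      ContinuousOn.intervalIntegrable
        (by rw [Set.uIcc_of_le hx.1.le]; exact hqcont.mono (Set.Icc_subset_Icc le_rfl hx.2.le))
    have hca : ContinuousAt q x := hqcont.continuousAt hnx
    exact intervalIntegral.integral_hasDerivAt_right hqi
      ⟨Set.Icc v₁ v₂, hnx, hqcont.aestronglyMeasurable measurableSet_Icc⟩ hca
  set F : ℝ → ℝ := fun v => (-ν v) * Real.exp (-A v) with hF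
  have hFanti : AntitoneOn F (Set.Icc v₁ v₂) := by
    have hFderiv : ∀ x ∈ Set.Ioo v₁ v₂,
        HasDerivAt F (Real.exp (-A x) * (-(4 * π * r x * T x))) x := by
      intro x hx
      have hxI : x ∈ Set.Icc v₁ v₂ := Set.Ioo_subset_Icc_self hx
      have hνx : HasDerivAt ν
          (-(Ω x ^ 2) / (4 * r x) - (r x)⁻¹ * lam x * ν x + 4 * π * r x * T x) x :=
        (hν x hxI).hasDerivAt (Icc_mem_nhds hx.1 hx.2)
      have hAx : HasDerivAt (fun v => Real.exp (-A v)) (Real.exp (-A x) * (-q x)) x :=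
        ((hAderiv x hx).neg).exp
      have hprod := (hνx.neg).mul hAx
      convert hprod using 1
      case e'_4 => rfl
      case e'_5 => rfl
      case e'_8 => rfl
      have hr0 : r x ≠ 0 := hrne x hxI
      have hν0 : ν x ≠ 0 := ne_of_lt (hνneg x hxI)
      rw [hq]
      simp only [Pi.neg_apply]
      field_simp
      ring
    apply antitoneOn_of_deriv_nonpos (convex_Icc v₁ v₂)
    · exact (hνcont.neg).mul (Real.continuous_exp.comp_continuousOn hAcont.neg)
    · intro x hx
      rw [interior_Icc] at hx
      exact (hFderiv x hx).differentiableAt.differentiableWithinAt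
    · intro x hx
      rw [interior_Icc] at hx
      have hxI : x ∈ Set.Icc v₁ v₂ := Set.Ioo_subset_Icc_self hx
      rw [(hFderiv x hx).deriv]
      have h1 : (0:ℝ) ≤ 4 * π * r x * T x := by
        have := hT x hxI
        have hr1 : (0:ℝ) ≤ r x := le_trans hr₀.le (hrbound x hxI).1
        have := Real.pi_pos
        positivity
      have h2 : (0:ℝ) < Real.exp (-A x) := Real.exp_pos _
      nlinarith
  -- bound the exponent
  have habs : (∫ v in v₁..v₂, |lam v|) ≤ 2 * (R - r₀) :=
    abs_lam_integral_bound r₀ R v₁ v₂ hv r lam Ω hrderiv hlamcont hrbound hΩpos hmono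
  have hκint : IntervalIntegrable (fun v => -(Ω v ^ 2) / (4 * ν v)) volume v₁ v₂ :=
    ContinuousOn.intervalIntegrable (by
      rw [Set.uIcc_of_le hv.le]
      exact ((hΩcont.pow 2).neg).div (continuousOn_const.mul hνcont) hνne)
  have hlint : IntervalIntegrable (fun v => |lam v|) volume v₁ v₂ :=
    ContinuousOn.intervalIntegrable (by rw [Set.uIcc_of_le hv.le]; exact hlamcont.abs)
  have hAle : A v₂ ≤ 2 / r₀ * (2 * (R - r₀) + K) := by
    have hgint : IntervalIntegrable
        (fun v => (-(Ω v ^ 2) / (4 * ν v) + |lam v|) / r₀) volume v₁ v₂ := by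
      apply ContinuousOn.intervalIntegrable
      rw [Set.uIcc_of_le hv.le]
      exact ((((hΩcont.pow 2).neg).div (continuousOn_const.mul hνcont) hνne).add
        hlamcont.abs).div_const _
    have hmono' : ∀ v ∈ Set.Icc v₁ v₂,
        q v ≤ (-(Ω v ^ 2) / (4 * ν v) + |lam v|) / r₀ := by
      intro v hvI
      have hrv : r₀ ≤ r v := (hrbound v hvI).1
      have hrpos : 0 < r v := lt_of_lt_of_le hr₀ hrv
      have hκv := hκpos v hvI
      rw [hq]
      rw [div_le_div_iff₀ hrpos hr₀]
      nlinarith [neg_abs_le (lam v), abs_nonneg (lam v),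
        mul_nonneg (add_nonneg hκv (abs_nonneg (lam v))) (sub_nonneg.2 hrv)]
    have h2 : A v₂ ≤ ∫ v in v₁..v₂, (-(Ω v ^ 2) / (4 * ν v) + |lam v|) / r₀ :=
      intervalIntegral.integral_mono_on hv.le hqint hgint hmono'
    have h3 : (∫ v in v₁..v₂, (-(Ω v ^ 2) / (4 * ν v) + |lam v|) / r₀)
        = ((∫ v in v₁..v₂, -(Ω v ^ 2) / (4 * ν v)) + ∫ v in v₁..v₂, |lam v|) / r₀ := by
      rw [intervalIntegral.integral_div, intervalIntegral.integral_add hκint hlint]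
    have h4 : ((∫ v in v₁..v₂, -(Ω v ^ 2) / (4 * ν v)) + ∫ v in v₁..v₂, |lam v|) / r₀
        ≤ (K + 2 * (R - r₀)) / r₀ := by
      exact div_le_div_of_nonneg_right (by linarith [hκ, habs]) hr₀.le
    have h5 : (K + 2 * (R - r₀)) / r₀ ≤ 2 / r₀ * (2 * (R - r₀) + K) := by
      have he : 2 / r₀ * (2 * (R - r₀) + K) = (2 * (2 * (R - r₀) + K)) / r₀ := by ring
      rw [he]
      exact div_le_div_of_nonneg_right (by linarith) hr₀.le
    calc A v₂ ≤ _ := h2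
      _ = _ := h3
      _ ≤ _ := h4
      _ ≤ _ := h5
  -- conclude
  have hm := hFanti (Set.left_mem_Icc.2 hv.le) (Set.right_mem_Icc.2 hv.le) hv.le
  have hA1 : A v₁ = 0 := intervalIntegral.integral_same
  have hν1 : ν v₁ < 0 := hνneg v₁ (Set.left_mem_Icc.2 hv.le)
  have hν2 : ν v₂ < 0 := hνneg v₂ (Set.right_mem_Icc.2 hv.le)
  rw [hF] at hm
  simp only [hA1, neg_zero, Real.exp_zero, mul_one] at hm
  have hstep : -ν v₂ ≤ (-ν v₁) * Real.exp (A v₂) := by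
    have := mul_le_mul_of_nonneg_right hm (Real.exp_pos (A v₂)).le
    rwa [mul_assoc, ← Real.exp_add, neg_add_cancel, Real.exp_zero, mul_one] at this
  have hstep2 : (-ν v₁) * Real.exp (A v₂)
      ≤ (-ν v₁) * Real.exp (2 / r₀ * (2 * (R - r₀) + K)) :=
    mul_le_mul_of_nonneg_left (Real.exp_le_exp.2 hAle) (by linarith)
  rw [abs_of_neg hν2, abs_of_neg hν1]
  linarith
end
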